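/- Let (ρ,σ) ∈ 𝔙 and let P, Q ∈ L^(l)∖{0} be such that [P,Q] ∈ K∖{0}. If v_{ρ,σ}(P) ≠ 0, then there exists G₀ ∈ K[P,Q] (the K-subalgebra of L^(l) generated by P and Q) such that [ℓ_{ρ,σ}(G₀), ℓ_{ρ,σ}(P)] ≠ 0 and [[ℓ_{ρ,σ}(G₀), ℓ_{ρ,σ}(P)], ℓ_{ρ,σ}(P)] = 0. Moreover, defining recursively G_i := [G_{i−1}, P], one has [ℓ_{ρ,σ}(G_i), ℓ_{ρ,σ}(P)] = 0 for all i ≥ 1. -/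

import Mathlib

/-!
Formalization framework for "On the shape of possible counterexamples to the Jacobian
Conjecture" by Guccione–Guccione–Valqui.

The algebra `L^(l) = K[x^{1/l}, x^{-1/l}, y]` is modelled as the monoid algebra of the
additive monoid `ℤ × ℕ` over `K`, where the exponent pair `(i, j)` encodes the monomial
`x^(i/l) * y^j`.
-/

open scoped Classical

set_option linter.unusedSectionVars false

noncomputable section

namespace JC

variable (K : Type*) [Field K] [CharZero K]

/-- `L^(l)`, modelled as the monoid algebra on `ℤ × ℕ`. -/
abbrev Ll := AddMonoidAlgebra K (ℤ × ℕ)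

variable {K}

/-- The variable `x = (x^{1/l})^l` of `L = K[x,y] ⊆ L^(l)`. -/
def xVar (l : ℕ) : Ll K := AddMonoidAlgebra.single ((l : ℤ), (0 : ℕ)) (1 : K)

/-- The variable `y`. -/
def yVar : Ll K := AddMonoidAlgebra.single ((0 : ℤ), (1 : ℕ)) (1 : K)

/-- The partial derivative `∂ₓ` on `L^(l)`:  `x^(i/l) y^j ↦ (i/l) x^(i/l - 1) y^j`. -/
def dX (l : ℕ) (P : Ll K) : Ll K :=
  Finsupp.sum P.coeff fun p c => AddMonoidAlgebra.single (p.1 - (l : ℤ), p.2) (c * ((p.1 : K) / (l : K)))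

/-- The partial derivative `∂ᵧ` on `L^(l)`. -/
def dY (P : Ll K) : Ll K :=
  Finsupp.sum P.coeff fun p c => AddMonoidAlgebra.single (p.1, p.2 - 1) (c * (p.2 : K))

/-- The Jacobian `[P,Q] = ∂ₓP ∂ᵧQ − ∂ᵧP ∂ₓQ`. -/
def br (l : ℕ) (P Q : Ll K) : Ll K := dX l P * dY Q - dY P * dX l Q

/-- `[P,Q] ∈ K^×`, i.e. the Jacobian is a nonzero constant. -/
def JacConst (l : ℕ) (P Q : Ll K) : Prop :=
  ∃ c : K, c ≠ 0 ∧ br l P Q = algebraMap K (Ll K) c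

/-- Membership in `L = K[x,y] ⊆ L^(l)`: all exponents `i/l` are nonnegative integers. -/
def InL (l : ℕ) (P : Ll K) : Prop := ∀ p ∈ P.coeff.support, 0 ≤ p.1 ∧ (l : ℤ) ∣ p.1

/-- The point `(i/l, j)` of `ℚ²` attached to an exponent pair `(i,j)`. -/
def pt (l : ℕ) (p : ℤ × ℕ) : ℚ × ℚ := ((p.1 : ℚ) / (l : ℚ), (p.2 : ℚ))

/-- The `(ρ,σ)`-degree `ρ·(i/l) + σ·j` of an exponent pair. -/
def dg (l : ℕ) (ρ σ : ℤ) (p : ℤ × ℕ) : ℚ :=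
  (ρ : ℚ) * ((p.1 : ℚ) / (l : ℚ)) + (σ : ℚ) * (p.2 : ℚ)

/-- `v_{ρ,σ}(P) ∈ WithBot ℚ`, with the convention `v_{ρ,σ}(0) = ⊥ = −∞`. -/
def v (l : ℕ) (ρ σ : ℤ) (P : Ll K) : WithBot ℚ :=
  P.coeff.support.sup fun p => ((dg l ρ σ p : ℚ) : WithBot ℚ)

/-- `ℚ`-valued `(ρ,σ)`-degree (with junk value `0` at `P = 0`). -/
def vq (l : ℕ) (ρ σ : ℤ) (P : Ll K) : ℚ := (v l ρ σ P).unbotD 0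

/-- The `(ρ,σ)`-leading form `ℓ_{ρ,σ}(P)`. -/
def lead (l : ℕ) (ρ σ : ℤ) (P : Ll K) : Ll K :=
  AddMonoidAlgebra.ofCoeff (Finsupp.filter (fun p => ((dg l ρ σ p : ℚ) : WithBot ℚ) = v l ρ σ P) P.coeff)

/-- `(ρ,σ)`-homogeneity. -/
def IsHomog (l : ℕ) (ρ σ : ℤ) (P : Ll K) : Prop := P = lead l ρ σ P

/-- Directions: coprime pairs of integers. -/
def IsDirV (d : ℤ × ℤ) : Prop := Int.gcd d.1 d.2 = 1

/-- `Dir(P)`: the set of directions in which the leading form is not a monomial. -/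
def DirSet (l : ℕ) (P : Ll K) : Set (ℤ × ℤ) :=
  {d | IsDirV d ∧ 1 < (lead l d.1 d.2 P).coeff.support.card}

/-- Cross product of two vectors of `ℚ²`. -/
def cross (A B : ℚ × ℚ) : ℚ := A.1 * B.2 - A.2 * B.1

/-- Dot product of two vectors of `ℚ²`. -/
def dot (A B : ℚ × ℚ) : ℚ := A.1 * B.1 + A.2 * B.2

/-- Alignment `A ∼ B`. -/
def Aligned (A B : ℚ × ℚ) : Prop := cross A B = 0

/-- A pair of integers viewed in `ℚ²`. -/
def dq (d : ℤ × ℤ) : ℚ × ℚ := ((d.1 : ℚ), (d.2 : ℚ))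

/-- Evaluation `v_{ρ,σ}` at a point of `ℚ²`. -/
def vpt (ρ σ : ℤ) (A : ℚ × ℚ) : ℚ := (ρ : ℚ) * A.1 + (σ : ℚ) * A.2

/-- `st_{ρ,σ}(P)`: the endpoint of the segment `Supp(ℓ_{ρ,σ}(P))` at which the
functional `(ρ,σ) × ·` is minimal (so that `(ρ,σ) × (en − st) ≥ 0`). -/
def stPt (l : ℕ) (ρ σ : ℤ) (P : Ll K) : ℚ × ℚ :=
  if h : (lead l ρ σ P).coeff.support.Nonempty then
    pt l <| Classical.choose <|
      (lead l ρ σ P).coeff.support.exists_min_image (fun p => cross (dq (ρ, σ)) (pt l p)) h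
  else (0, 0)

/-- `en_{ρ,σ}(P)`: the other endpoint of the segment `Supp(ℓ_{ρ,σ}(P))`. -/
def enPt (l : ℕ) (ρ σ : ℤ) (P : Ll K) : ℚ × ℚ :=
  if h : (lead l ρ σ P).coeff.support.Nonempty then
    pt l <| Classical.choose <|
      (lead l ρ σ P).coeff.support.exists_max_image (fun p => cross (dq (ρ, σ)) (pt l p)) h
  else (0, 0)

/-- The index (`0`–`3`) of a direction `a` in the counterclockwise sweep of the circle of
directions starting just after the base direction `u`. -/
def idx (u a : ℤ × ℤ) : ℕ :=
  if 0 < cross (dq u) (dq a) then 0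
  else if cross (dq u) (dq a) = 0 ∧ dot (dq u) (dq a) < 0 then 1
  else if cross (dq u) (dq a) < 0 then 2
  else 3

/-- The strict counterclockwise order on directions with base point `u`:  `a` is
encountered strictly before `b` when running counterclockwise starting just after `u`. -/
def ccwLt (u a b : ℤ × ℤ) : Prop :=
  idx u a < idx u b ∨ (idx u a = idx u b ∧ 0 < cross (dq a) (dq b))

/-- Reflexive closure of `ccwLt`. -/
def ccwLe (u a b : ℤ × ℤ) : Prop := a = b ∨ ccwLt u a b

/-- `w = Succ_P(u)`: the first element of `Dir(P)` encountered starting from `u` and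
running counterclockwise. -/
def IsSucc (l : ℕ) (P : Ll K) (u w : ℤ × ℤ) : Prop :=
  w ∈ DirSet l P ∧ w ≠ u ∧ ∀ w' ∈ DirSet l P, w' ≠ u → ccwLe u w w'

/-- `(m,n)`-pairs in `L^(l)`. -/
structure IsMNPair (l m n : ℕ) (P Q : Ll K) : Prop where
  coprime : Nat.Coprime m n
  one_lt_m : 1 < m
  one_lt_n : 1 < n
  jac : JacConst l P Q
  ratio11 : vq l 1 1 P / vq l 1 1 Q = (m : ℚ) / (n : ℚ)
  ratio10 : vq l 1 0 P / vq l 1 0 Q = (m : ℚ) / (n : ℚ)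
  en10 : vpt 1 (-1) (enPt l 1 0 P) < 0

/-- Standard `(m,n)`-pairs (in `L^(1)`). -/
def IsStandard (m n : ℕ) (P Q : Ll K) : Prop :=
  IsMNPair 1 m n P Q ∧ vpt 1 (-1) (stPt 1 1 0 P) < 0

/-- Membership in the interval of directions `I = ](1,−1),(1,0)]`. -/
def InI (d : ℤ × ℤ) : Prop := IsDirV d ∧ 0 < d.1 + d.2 ∧ d.2 ≤ 0

/-- Regular corners of an `(m,n)`-pair. -/
def IsRegCorner (l m : ℕ) (P : Ll K) (A : ℚ × ℚ) (d : ℤ × ℤ) : Prop :=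
  (∃ a : ℤ, ∃ b : ℕ, A = ((a : ℚ) / (l : ℚ), (b : ℚ)) ∧ 1 ≤ b ∧ (a : ℚ) / (l : ℚ) < (b : ℚ)) ∧
  InI d ∧ d ∈ DirSet l P ∧ enPt l d.1 d.2 P = ((m : ℚ) * A.1, (m : ℚ) * A.2)

/-- The set `A(P)`. -/
def ASet (l : ℕ) (P : Ll K) : Set (ℤ × ℤ) :=
  {d | d ∈ DirSet l P ∧ InI d ∧
    vpt 0 (-1) (stPt l d.1 d.2 P) < -1 ∧ vpt 1 (-1) (stPt l d.1 d.2 P) < 0}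

/-- The univariate polynomial `𝔭` with `ℓ_{ρ,σ}(P) = x^(k/l) 𝔭(z)`, `z := x^(−σ/ρ) y`
(for a `(ρ,σ)`-homogeneous element with `ρ > 0`, the `z`-degree equals the `y`-degree). -/
def toPoly (R : Ll K) : Polynomial K :=
  Finsupp.sum R.coeff fun p c => Polynomial.C c * Polynomial.X ^ p.2

/-- The minimal `y`-exponent occurring in `R`. -/
def ymin (R : Ll K) : ℕ := sInf (Prod.snd '' (R.coeff.support : Set (ℤ × ℕ)))

/-- The univariate polynomial `p` with `ℓ_{ρ,σ}(P) = x^(r/l) y^s p(z)` and `p(0) ≠ 0`. -/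
def toPolyL (R : Ll K) : Polynomial K :=
  Finsupp.sum R.coeff fun p c => Polynomial.C c * Polynomial.X ^ (p.2 - ymin R)

/-- A regular corner in direction `d` is of type II. -/
def TypeII (l : ℕ) (P Q : Ll K) (d : ℤ × ℤ) : Prop :=
  br l (lead l d.1 d.2 P) (lead l d.1 d.2 Q) = 0 ∧
    1 < (toPoly (lead l d.1 d.2 P)).roots.toFinset.card

variable (K)

/-- The polynomial subalgebra `K[x,y] ⊆ L^(1)`. -/
def polyAlg : Subalgebra K (Ll K) := Algebra.adjoin K {xVar 1, yVar}

/-- `(P,Q)` is a counterexample to the Jacobian Conjecture: `P, Q ∈ K[x,y]`, the Jacobian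
`[P,Q]` is a nonzero constant, and `K[P,Q] ≠ K[x,y]`. -/
def IsCtrex (P Q : Ll K) : Prop :=
  P ∈ polyAlg K ∧ Q ∈ polyAlg K ∧ JacConst 1 P Q ∧ Algebra.adjoin K {P, Q} ≠ polyAlg K

/-- The set of numbers `gcd(v_{1,1}(P), v_{1,1}(Q))` over all counterexamples `(P,Q)`. -/
def BSet : Set ℕ :=
  {d | ∃ P Q : Ll K, ∃ dP dQ : ℕ, IsCtrex K P Q ∧
    (dP : ℚ) = vq 1 1 1 P ∧ (dQ : ℚ) = vq 1 1 1 Q ∧ d = Nat.gcd dP dQ}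

/-- The number `B`: the minimum of `gcd(v_{1,1}(P), v_{1,1}(Q))` over all counterexamples. -/
def Bnum : ℕ := sInf (BSet K)

variable {K}





set_option maxHeartbeats 4000000

section



@[simp] lemma dX_single (l : ℕ) (p : ℤ × ℕ) (c : K) :
    dX l (AddMonoidAlgebra.single p c) = AddMonoidAlgebra.single (p.1 - (l : ℤ), p.2) (c * ((p.1 : K) / (l : K))) := by
  unfold dX
  exact Finsupp.sum_single_index (by simp)

@[simp] lemma dY_single (p : ℤ × ℕ) (c : K) :
    dY (AddMonoidAlgebra.single p c) = AddMonoidAlgebra.single (p.1, p.2 - 1) (c * (p.2 : K)) := by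
  unfold dY
  exact Finsupp.sum_single_index (by simp)

@[simp] lemma dX_zero (l : ℕ) : dX l (0 : Ll K) = 0 := by unfold dX; simp
@[simp] lemma dY_zero : dY (0 : Ll K) = 0 := by unfold dY; simp

lemma dX_add (l : ℕ) (A B : Ll K) : dX l (A + B) = dX l A + dX l B := by
  unfold dX
  rw [AddMonoidAlgebra.coeff_add]
  apply Finsupp.sum_add_index (by simp) (by intros; rw [add_mul, AddMonoidAlgebra.single_add])

lemma dY_add (A B : Ll K) : dY (A + B) = dY A + dY B := by
  unfold dY
  rw [AddMonoidAlgebra.coeff_add]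
  apply Finsupp.sum_add_index (by simp) (by intros; rw [add_mul, AddMonoidAlgebra.single_add])

lemma dX_smul (l : ℕ) (c : K) (A : Ll K) : dX l (c • A) = c • dX l A := by
  unfold dX
  rw [AddMonoidAlgebra.coeff_smul, Finsupp.sum_smul_index' (by simp), Finsupp.smul_sum]
  exact Finsupp.sum_congr fun p hp => by rw [AddMonoidAlgebra.smul_single, smul_eq_mul, smul_eq_mul, mul_assoc]

lemma dY_smul (c : K) (A : Ll K) : dY (c • A) = c • dY A := by
  unfold dY
  rw [AddMonoidAlgebra.coeff_smul, Finsupp.sum_smul_index' (by simp), Finsupp.smul_sum]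
  exact Finsupp.sum_congr fun p hp => by rw [AddMonoidAlgebra.smul_single, smul_eq_mul, smul_eq_mul, mul_assoc]

lemma dX_mul (l : ℕ) (A B : Ll K) :
    dX l (A * B) = dX l A * B + A * dX l B := by
  induction A using AddMonoidAlgebra.induction_linear with
  | zero => simp
  | add f g hf hg => rw [add_mul, dX_add, hf, hg, dX_add, add_mul]; ring
  | single p a =>
      induction B using AddMonoidAlgebra.induction_linear with
      | zero => simp
      | add f g hf hg => rw [mul_add, dX_add, hf, hg, dX_add, mul_add]; ring
      | single q b =>
          rw [AddMonoidAlgebra.single_mul_single, dX_single, dX_single, dX_single,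
            AddMonoidAlgebra.single_mul_single, AddMonoidAlgebra.single_mul_single]
          have h1 : ((p.1 - (l:ℤ), p.2) + q) = ((p+q).1 - (l:ℤ), (p+q).2) := by
            simp [Prod.ext_iff]; ring
          have h2 : (p + (q.1 - (l:ℤ), q.2)) = ((p+q).1 - (l:ℤ), (p+q).2) := by
            simp [Prod.ext_iff]; ring
          rw [h1, h2, ← AddMonoidAlgebra.single_add]
          congr 1
          have : ((p+q).1 : K) = (p.1 : K) + (q.1 : K) := by push_cast [Prod.fst_add]; ring
          rw [this]
          ring

lemma dY_mul (A B : Ll K) :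
    dY (A * B) = dY A * B + A * dY B := by
  induction A using AddMonoidAlgebra.induction_linear with
  | zero => simp
  | add f g hf hg => rw [add_mul, dY_add, hf, hg, dY_add, add_mul]; ring
  | single p a =>
      induction B using AddMonoidAlgebra.induction_linear with
      | zero => simp
      | add f g hf hg => rw [mul_add, dY_add, hf, hg, dY_add, mul_add]; ring
      | single q b =>
          rw [AddMonoidAlgebra.single_mul_single, dY_single, dY_single, dY_single,
            AddMonoidAlgebra.single_mul_single, AddMonoidAlgebra.single_mul_single]
          have hfst : (p + q).1 = p.1 + q.1 := rfl
          have hsnd : (p + q).2 = p.2 + q.2 := rfl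
          have e1 : ((p.1, p.2 - 1) + q : ℤ × ℕ) = (p.1 + q.1, p.2 - 1 + q.2) := rfl
          have e2 : (p + (q.1, q.2 - 1) : ℤ × ℕ) = (p.1 + q.1, p.2 + (q.2 - 1)) := rfl
          rw [hfst, hsnd, e1, e2]
          rcases Nat.eq_zero_or_pos p.2 with hp | hp
          · rw [hp]
            simp only [Nat.cast_zero, mul_zero, zero_mul, AddMonoidAlgebra.single_zero, zero_add,
              Nat.zero_sub, Nat.cast_ofNat, zero_mul, mul_zero]
            congr 1
            ring
          · rcases Nat.eq_zero_or_pos q.2 with hq | hq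
            · rw [hq]
              simp only [Nat.cast_zero, mul_zero, AddMonoidAlgebra.single_zero, add_zero]
              congr 1
              ring
            · rw [show (p.2 - 1 + q.2) = p.2 + q.2 - 1 from by omega,
                show (p.2 + (q.2 - 1)) = p.2 + q.2 - 1 from by omega, ← AddMonoidAlgebra.single_add]
              congr 1
              push_cast [hp, hq]
              ring

lemma br_def' (l : ℕ) (A C : Ll K) : br l A C = dX l A * dY C - dY A * dX l C := rfl

/-- the Jacobian bracket `[·, C]` as a derivation. -/
def brD (l : ℕ) (C : Ll K) : Derivation K (Ll K) (Ll K) where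
  toFun A := br l A C
  map_add' A B := by simp only [br_def', dX_add, dY_add]; ring
  map_smul' c A := by
    simp only [br_def', dX_smul, dY_smul, RingHom.id_apply, smul_sub, smul_mul_assoc]
  map_one_eq_zero' := by
    simp only [br_def']
    rw [show (1 : Ll K) = AddMonoidAlgebra.single (0 : ℤ × ℕ) (1 : K) from rfl]
    simp
  leibniz' A B := by
    show br l (A * B) C = A • br l B C + B • br l A C
    simp only [br_def', dX_mul, dY_mul, smul_eq_mul]
    ring

lemma brD_apply (l : ℕ) (C A : Ll K) : brD l C A = br l A C := rfl

lemma br_add_left (l : ℕ) (A B C : Ll K) : br l (A + B) C = br l A C + br l B C := by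
  rw [← brD_apply, ← brD_apply, ← brD_apply, map_add]

lemma br_smul_left (l : ℕ) (c : K) (A C : Ll K) : br l (c • A) C = c • br l A C := by
  rw [← brD_apply, ← brD_apply, Derivation.map_smul]

lemma br_mul_left (l : ℕ) (A B C : Ll K) :
    br l (A * B) C = A * br l B C + B * br l A C := by
  have := (brD l C).leibniz A B
  rw [brD_apply, brD_apply, brD_apply, smul_eq_mul, smul_eq_mul] at this
  exact this

lemma br_zero_left (l : ℕ) (C : Ll K) : br l 0 C = 0 := by rw [br_def']; simp

lemma br_zero_right (l : ℕ) (A : Ll K) : br l A 0 = 0 := by rw [br_def']; simp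

lemma br_antisymm (l : ℕ) (A B : Ll K) : br l A B = - br l B A := by
  rw [br_def', br_def']; ring

lemma br_self (l : ℕ) (A : Ll K) : br l A A = 0 := by rw [br_def']; ring

lemma algebraMap_eq_single (c : K) :
    algebraMap K (Ll K) c = AddMonoidAlgebra.single (0 : ℤ × ℕ) c := by
  rw [Algebra.algebraMap_eq_smul_one]
  rw [show (1 : Ll K) = AddMonoidAlgebra.single (0 : ℤ × ℕ) (1 : K) from rfl]
  rw [AddMonoidAlgebra.smul_single, smul_eq_mul, mul_one]

lemma br_algebraMap_left (l : ℕ) (c : K) (A : Ll K) :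
    br l (algebraMap K (Ll K) c) A = 0 := by
  rw [br_def', algebraMap_eq_single]
  simp

lemma br_pow_left (l : ℕ) (A C : Ll K) (n : ℕ) :
    br l (A ^ n) C = (n : K) • (A ^ (n-1) * br l A C) := by
  have := (brD l C).leibniz_pow A n
  rw [brD_apply, brD_apply] at this
  rw [this, smul_eq_mul, ← Nat.cast_smul_eq_nsmul K]

lemma br_sub_left (l : ℕ) (A B C : Ll K) : br l (A - B) C = br l A C - br l B C := by
  rw [← brD_apply, ← brD_apply, ← brD_apply, map_sub]

lemma br_neg_left (l : ℕ) (A C : Ll K) : br l (-A) C = - br l A C := by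
  rw [← brD_apply, ← brD_apply, map_neg]


end

section


variable (l : ℕ) (ρ σ : ℤ)

lemma dg_add (p q : ℤ × ℕ) : dg l ρ σ (p + q) = dg l ρ σ p + dg l ρ σ q := by
  unfold dg
  have h1 : ((p+q).1 : ℚ) = (p.1 : ℚ) + q.1 := by push_cast [Prod.fst_add]; ring
  have h2 : ((p+q).2 : ℚ) = (p.2 : ℚ) + q.2 := by push_cast [Prod.snd_add]; ring
  rw [h1, h2, add_div]
  ring

/-- upper bound predicate: all exponents have degree `≤ d`. -/
def vle (A : Ll K) (d : ℚ) : Prop := ∀ p ∈ A.coeff.support, dg l ρ σ p ≤ d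

/-- strict upper bound predicate. -/
def vlt (A : Ll K) (d : ℚ) : Prop := ∀ p ∈ A.coeff.support, dg l ρ σ p < d

/-- homogeneity of degree `d` (allows `0`). -/
def Hg (d : ℚ) (A : Ll K) : Prop := ∀ p ∈ A.coeff.support, dg l ρ σ p = d

variable {l ρ σ}

lemma vle_zero (d : ℚ) : vle l ρ σ (0 : Ll K) d := by intro p hp; simp at hp
lemma vlt_zero (d : ℚ) : vlt l ρ σ (0 : Ll K) d := by intro p hp; simp at hp
lemma Hg_zero (d : ℚ) : Hg l ρ σ d (0 : Ll K) := by intro p hp; simp at hp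

lemma vle_add {A B : Ll K} {d : ℚ} (hA : vle l ρ σ A d) (hB : vle l ρ σ B d) :
    vle l ρ σ (A + B) d := fun p hp => by
  rcases Finset.mem_union.mp (Finsupp.support_add hp) with h | h
  exacts [hA p h, hB p h]

lemma vlt_add {A B : Ll K} {d : ℚ} (hA : vlt l ρ σ A d) (hB : vlt l ρ σ B d) :
    vlt l ρ σ (A + B) d := fun p hp => by
  rcases Finset.mem_union.mp (Finsupp.support_add hp) with h | h
  exacts [hA p h, hB p h]

lemma Hg_add {A B : Ll K} {d : ℚ} (hA : Hg l ρ σ d A) (hB : Hg l ρ σ d B) :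
    Hg l ρ σ d (A + B) := fun p hp => by
  rcases Finset.mem_union.mp (Finsupp.support_add hp) with h | h
  exacts [hA p h, hB p h]

lemma vle_mul {A B : Ll K} {a b : ℚ} (hA : vle l ρ σ A a) (hB : vle l ρ σ B b) :
    vle l ρ σ (A * B) (a + b) := by
  intro p hp
  have := AddMonoidAlgebra.support_coeff_mul_subset A B hp
  rcases Finset.mem_add.mp this with ⟨q, hq, r, hr, rfl⟩
  rw [dg_add]
  exact add_le_add (hA q hq) (hB r hr)

lemma vlt_mul_of_lt_le {A B : Ll K} {a b : ℚ} (hA : vlt l ρ σ A a) (hB : vle l ρ σ B b) :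
    vlt l ρ σ (A * B) (a + b) := by
  intro p hp
  rcases Finset.mem_add.mp (AddMonoidAlgebra.support_coeff_mul_subset A B hp) with ⟨q, hq, r, hr, rfl⟩
  rw [dg_add]
  exact add_lt_add_of_lt_of_le (hA q hq) (hB r hr)

lemma vlt_mul_of_le_lt {A B : Ll K} {a b : ℚ} (hA : vle l ρ σ A a) (hB : vlt l ρ σ B b) :
    vlt l ρ σ (A * B) (a + b) := by
  intro p hp
  rcases Finset.mem_add.mp (AddMonoidAlgebra.support_coeff_mul_subset A B hp) with ⟨q, hq, r, hr, rfl⟩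
  rw [dg_add]
  exact add_lt_add_of_le_of_lt (hA q hq) (hB r hr)

lemma Hg_mul {A B : Ll K} {a b : ℚ} (hA : Hg l ρ σ a A) (hB : Hg l ρ σ b B) :
    Hg l ρ σ (a + b) (A * B) := by
  intro p hp
  rcases Finset.mem_add.mp (AddMonoidAlgebra.support_coeff_mul_subset A B hp) with ⟨q, hq, r, hr, rfl⟩
  rw [dg_add, hA q hq, hB r hr]

lemma Hg_single (p : ℤ × ℕ) (c : K) : Hg l ρ σ (dg l ρ σ p) (AddMonoidAlgebra.single p c) := by
  intro q hq
  rw [AddMonoidAlgebra.coeff_single] at hq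
  have := Finsupp.support_single_subset hq
  simp at this
  rw [this]

lemma Hg_pow {A : Ll K} {a : ℚ} (hA : Hg l ρ σ a A) (n : ℕ) :
    Hg l ρ σ (n * a) (A ^ n) := by
  induction n with
  | zero =>
      simp only [pow_zero, Nat.cast_zero, zero_mul]
      rw [show (1 : Ll K) = AddMonoidAlgebra.single (0:ℤ×ℕ) (1:K) from rfl]
      have := Hg_single (l := l) (ρ := ρ) (σ := σ) (0 : ℤ×ℕ) (1 : K)
      have h0 : dg l ρ σ (0 : ℤ×ℕ) = 0 := by unfold dg; simp
      rwa [h0] at this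
  | succ n ih =>
      have := Hg_mul ih hA
      rw [pow_succ]
      convert this using 1
      push_cast
      ring

lemma Hg_smul {A : Ll K} {a : ℚ} (c : K) (hA : Hg l ρ σ a A) : Hg l ρ σ a (c • A) := by
  intro p hp
  exact hA p (Finsupp.support_smul hp)

lemma Hg_neg {A : Ll K} {a : ℚ} (hA : Hg l ρ σ a A) : Hg l ρ σ a (-A) := by
  intro p hp
  rw [AddMonoidAlgebra.coeff_neg, Finsupp.support_neg] at hp
  exact hA p hp

-- v and vq basics
lemma coeffNe {A : Ll K} (h : A ≠ 0) : A.coeff ≠ 0 := by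
  rwa [ne_eq, ← AddMonoidAlgebra.coeff_inj, AddMonoidAlgebra.coeff_zero] at h

lemma v_eq_sup' {A : Ll K} (hne : A.coeff.support.Nonempty) :
    v l ρ σ A = ((A.coeff.support.sup' hne (dg l ρ σ) : ℚ) : WithBot ℚ) := by
  unfold v
  exact (Finset.coe_sup' hne _).symm

lemma vq_eq_sup' {A : Ll K} (hne : A.coeff.support.Nonempty) :
    vq l ρ σ A = A.coeff.support.sup' hne (dg l ρ σ) := by
  unfold vq
  rw [v_eq_sup' hne]
  rfl

lemma v_eq_bot_iff {A : Ll K} : v l ρ σ A = ⊥ ↔ A = 0 := by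
  unfold v
  rw [Finset.sup_eq_bot_iff]
  constructor
  · intro h
    by_contra hA
    obtain ⟨p, hp⟩ := Finsupp.support_nonempty_iff.mpr (coeffNe hA)
    exact WithBot.coe_ne_bot (h p hp)
  · intro h; subst h; simp

lemma v_eq_coe_vq {A : Ll K} (hA : A ≠ 0) : v l ρ σ A = ((vq l ρ σ A : ℚ) : WithBot ℚ) := by
  have hne : A.coeff.support.Nonempty := Finsupp.support_nonempty_iff.mpr (coeffNe hA)
  rw [v_eq_sup' hne, vq_eq_sup' hne]

lemma exists_dg_eq_vq {A : Ll K} (hA : A ≠ 0) :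
    ∃ p ∈ A.coeff.support, dg l ρ σ p = vq l ρ σ A := by
  have hne : A.coeff.support.Nonempty := Finsupp.support_nonempty_iff.mpr (coeffNe hA)
  obtain ⟨p, hp, he⟩ := Finset.exists_mem_eq_sup' hne (dg l ρ σ)
  exact ⟨p, hp, by rw [vq_eq_sup' hne, ← he]⟩

lemma vle_vq {A : Ll K} (hA : A ≠ 0) : vle l ρ σ A (vq l ρ σ A) := by
  intro p hp
  have hne : A.coeff.support.Nonempty := Finsupp.support_nonempty_iff.mpr (coeffNe hA)
  rw [vq_eq_sup' hne]
  exact Finset.le_sup' _ hp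

-- lead basics
lemma lead_apply (A : Ll K) (p : ℤ × ℕ) :
    (lead l ρ σ A).coeff p = if ((dg l ρ σ p : ℚ) : WithBot ℚ) = v l ρ σ A then A.coeff p else 0 := by
  unfold lead
  rw [AddMonoidAlgebra.coeff_ofCoeff, Finsupp.filter_apply]

lemma lead_apply_of_dg_eq {A : Ll K} (hA : A ≠ 0) {p : ℤ × ℕ}
    (h : dg l ρ σ p = vq l ρ σ A) : (lead l ρ σ A).coeff p = A.coeff p := by
  rw [lead_apply, if_pos]
  rw [v_eq_coe_vq hA, h]

lemma lead_apply_of_dg_ne {A : Ll K} (hA : A ≠ 0) {p : ℤ × ℕ}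
    (h : dg l ρ σ p ≠ vq l ρ σ A) : (lead l ρ σ A).coeff p = 0 := by
  rw [lead_apply, if_neg]
  rw [v_eq_coe_vq hA]
  exact fun hc => h (WithBot.coe_injective hc)

@[simp] lemma lead_zero : lead l ρ σ (0 : Ll K) = 0 := by
  unfold lead; ext; simp [Finsupp.filter_zero]

lemma lead_ne_zero {A : Ll K} (hA : A ≠ 0) : lead l ρ σ A ≠ 0 := by
  obtain ⟨p, hp, he⟩ := exists_dg_eq_vq (l := l) (ρ := ρ) (σ := σ) hA
  intro h
  have h2 := lead_apply_of_dg_eq hA he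
  rw [h] at h2
  rw [Finsupp.mem_support_iff] at hp
  exact hp (by simpa using h2.symm)

lemma Hg_lead {A : Ll K} (hA : A ≠ 0) : Hg l ρ σ (vq l ρ σ A) (lead l ρ σ A) := by
  intro p hp
  rw [Finsupp.mem_support_iff] at hp
  by_contra h
  exact hp (lead_apply_of_dg_ne hA h)

lemma support_lead_subset (A : Ll K) : (lead l ρ σ A).coeff.support ⊆ A.coeff.support := by
  unfold lead
  rw [AddMonoidAlgebra.coeff_ofCoeff, Finsupp.support_filter]
  exact Finset.filter_subset _ _

/-- the tail `A - lead A` is strictly smaller. -/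
lemma vlt_sub_lead {A : Ll K} (hA : A ≠ 0) : vlt l ρ σ (A - lead l ρ σ A) (vq l ρ σ A) := by
  intro p hp
  rw [Finsupp.mem_support_iff] at hp
  have hle : dg l ρ σ p ≤ vq l ρ σ A := by
    by_cases hmem : p ∈ A.coeff.support
    · exact vle_vq hA p hmem
    · exfalso
      rw [Finsupp.notMem_support_iff] at hmem
      apply hp
      rw [AddMonoidAlgebra.coeff_sub, Finsupp.sub_apply, hmem, lead_apply]
      split <;> simp [hmem]
  rcases lt_or_eq_of_le hle with h | h
  · exact h
  · exfalso
    apply hp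
    rw [AddMonoidAlgebra.coeff_sub, Finsupp.sub_apply, lead_apply_of_dg_eq hA h, sub_self]

/-- THE workhorse: a nonzero homogeneous part plus a strictly smaller tail. -/
lemma lead_eq_of_decomp {H E : Ll K} {d : ℚ} (hH : H ≠ 0) (hHg : Hg l ρ σ d H)
    (hE : vlt l ρ σ E d) :
    H + E ≠ 0 ∧ vq l ρ σ (H + E) = d ∧ lead l ρ σ (H + E) = H := by
  -- coefficients at degree-d points agree with H
  have hEp : ∀ p : ℤ × ℕ, dg l ρ σ p = d → E.coeff p = 0 := by
    intro p hp
    by_contra h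
    have := hE p (Finsupp.mem_support_iff.mpr h)
    rw [hp] at this
    exact lt_irrefl _ this
  obtain ⟨p₀, hp₀⟩ := Finsupp.support_nonempty_iff.mpr (coeffNe hH)
  have hd₀ : dg l ρ σ p₀ = d := hHg p₀ hp₀
  have hsum₀ : (H + E).coeff p₀ ≠ 0 := by
    rw [AddMonoidAlgebra.coeff_add, Finsupp.add_apply, hEp p₀ hd₀, add_zero]
    exact Finsupp.mem_support_iff.mp hp₀
  have hne : H + E ≠ 0 := fun h => hsum₀ (by rw [h]; rfl)
  have hvle : vle l ρ σ (H + E) d := by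
    intro p hp
    rcases Finset.mem_union.mp (Finsupp.support_add hp) with h | h
    · exact le_of_eq (hHg p h)
    · exact le_of_lt (hE p h)
  have hvq : vq l ρ σ (H + E) = d := by
    obtain ⟨q, hq, he⟩ := exists_dg_eq_vq (l := l) (ρ := ρ) (σ := σ) hne
    have h1 : vq l ρ σ (H + E) ≤ d := he ▸ hvle q hq
    have h2 : d ≤ vq l ρ σ (H + E) := hd₀ ▸ vle_vq hne p₀ (Finsupp.mem_support_iff.mpr hsum₀)
    exact le_antisymm h1 h2
  refine ⟨hne, hvq, ?_⟩
  ext p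
  by_cases hdp : dg l ρ σ p = d
  · rw [lead_apply_of_dg_eq hne (by rw [hvq]; exact hdp), AddMonoidAlgebra.coeff_add, Finsupp.add_apply, hEp p hdp, add_zero]
  · rw [lead_apply_of_dg_ne hne (by rw [hvq]; exact hdp)]
    symm
    by_contra h
    exact hdp (hHg p (Finsupp.mem_support_iff.mpr h))

lemma lead_of_Hg {A : Ll K} {d : ℚ} (hA : A ≠ 0) (hHg : Hg l ρ σ d A) :
    vq l ρ σ A = d ∧ lead l ρ σ A = A := by
  have := lead_eq_of_decomp (l := l) (ρ := ρ) (σ := σ) hA hHg (vlt_zero d)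
  rw [add_zero] at this
  exact ⟨this.2.1, this.2.2⟩

lemma decomp_lead (A : Ll K) : A = lead l ρ σ A + (A - lead l ρ σ A) := by ring

lemma vq_lead {A : Ll K} (hA : A ≠ 0) : vq l ρ σ (lead l ρ σ A) = vq l ρ σ A :=
  (lead_of_Hg (lead_ne_zero hA) (Hg_lead hA)).1

lemma lead_mul {A B : Ll K} (hA : A ≠ 0) (hB : B ≠ 0) :
    A * B ≠ 0 ∧ vq l ρ σ (A * B) = vq l ρ σ A + vq l ρ σ B ∧
      lead l ρ σ (A * B) = lead l ρ σ A * lead l ρ σ B := by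
  set a := vq l ρ σ A
  set b := vq l ρ σ B
  have hLA := lead_ne_zero (l := l) (ρ := ρ) (σ := σ) hA
  have hLB := lead_ne_zero (l := l) (ρ := ρ) (σ := σ) hB
  have hH : lead l ρ σ A * lead l ρ σ B ≠ 0 := mul_ne_zero hLA hLB
  have hHg : Hg l ρ σ (a + b) (lead l ρ σ A * lead l ρ σ B) :=
    Hg_mul (Hg_lead hA) (Hg_lead hB)
  have hdec : A * B = lead l ρ σ A * lead l ρ σ B +
      (lead l ρ σ A * (B - lead l ρ σ B) + (A - lead l ρ σ A) * B) := by ring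
  have hE : vlt l ρ σ (lead l ρ σ A * (B - lead l ρ σ B) + (A - lead l ρ σ A) * B) (a + b) := by
    apply vlt_add
    · by_cases hB' : B - lead l ρ σ B = 0
      · rw [hB']; simpa using vlt_zero _
      · apply vlt_mul_of_le_lt
        · intro p hp; exact le_of_eq (Hg_lead hA p hp)
        · exact vlt_sub_lead hB
    · apply vlt_mul_of_lt_le
      · exact vlt_sub_lead hA
      · exact vle_vq hB
  have := lead_eq_of_decomp (l := l) (ρ := ρ) (σ := σ) hH hHg hE
  rw [← hdec] at this
  exact this

lemma lead_pow {A : Ll K} (hA : A ≠ 0) (n : ℕ) :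
    A ^ n ≠ 0 ∧ vq l ρ σ (A ^ n) = n * vq l ρ σ A ∧
      lead l ρ σ (A ^ n) = (lead l ρ σ A) ^ n := by
  induction n with
  | zero =>
      have h1 : Hg l ρ σ 0 (1 : Ll K) := by
        intro p hp
        rw [show (1 : Ll K) = AddMonoidAlgebra.single (0:ℤ×ℕ) (1:K) from rfl,
          AddMonoidAlgebra.coeff_single] at hp
        have := Finsupp.support_single_subset hp
        simp only [Finset.mem_singleton] at this
        rw [this]
        unfold dg; simp
      refine ⟨one_ne_zero, ?_, ?_⟩
      · simpa using (lead_of_Hg one_ne_zero h1).1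
      · simp [(lead_of_Hg one_ne_zero h1).2]
  | succ n ih =>
      obtain ⟨h1, h2, h3⟩ := ih
      obtain ⟨m1, m2, m3⟩ := lead_mul (l := l) (ρ := ρ) (σ := σ) h1 hA
      refine ⟨by rw [pow_succ]; exact m1, ?_, ?_⟩
      · rw [pow_succ, m2, h2]; push_cast; ring
      · rw [pow_succ, m3, h3, pow_succ]

lemma lead_smul {A : Ll K} (c : K) (hc : c ≠ 0) (hA : A ≠ 0) :
    c • A ≠ 0 ∧ vq l ρ σ (c • A) = vq l ρ σ A ∧ lead l ρ σ (c • A) = c • lead l ρ σ A := by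
  have h1 : c • A = c • lead l ρ σ A + c • (A - lead l ρ σ A) := by
    rw [← smul_add]; congr 1; ring
  have h2 : c • lead l ρ σ A ≠ 0 := smul_ne_zero hc (lead_ne_zero hA)
  have h3 : Hg l ρ σ (vq l ρ σ A) (c • lead l ρ σ A) := Hg_smul c (Hg_lead hA)
  have h4 : vlt l ρ σ (c • (A - lead l ρ σ A)) (vq l ρ σ A) := by
    intro p hp
    exact vlt_sub_lead hA p (Finsupp.support_smul hp)
  have := lead_eq_of_decomp (l := l) (ρ := ρ) (σ := σ) h2 h3 h4
  rw [← h1] at this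
  exact this

lemma lead_lead {A : Ll K} (hA : A ≠ 0) : lead l ρ σ (lead l ρ σ A) = lead l ρ σ A :=
  (lead_of_Hg (lead_ne_zero hA) (Hg_lead hA)).2

/-- values of `dg` lie in `(1/l)ℤ`. -/
lemma dg_mem (hl : 0 < l) (p : ℤ × ℕ) : ∃ z : ℤ, dg l ρ σ p = (z : ℚ) / (l : ℚ) := by
  refine ⟨ρ * p.1 + σ * p.2 * l, ?_⟩
  unfold dg
  have hl0 : (l : ℚ) ≠ 0 := by positivity
  field_simp
  push_cast
  ring

lemma vq_mem (hl : 0 < l) {A : Ll K} (hA : A ≠ 0) :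
    ∃ z : ℤ, vq l ρ σ A = (z : ℚ) / (l : ℚ) := by
  obtain ⟨p, hp, he⟩ := exists_dg_eq_vq (l := l) (ρ := ρ) (σ := σ) hA
  obtain ⟨z, hz⟩ := dg_mem (ρ := ρ) (σ := σ) hl p
  exact ⟨z, by rw [← he, hz]⟩


end

section


variable {l : ℕ} {ρ σ : ℤ}

lemma support_dX {A : Ll K} {q : ℤ × ℕ} (hq : q ∈ (dX l A).coeff.support) :
    ∃ p ∈ A.coeff.support, q = (p.1 - (l : ℤ), p.2) := by
  unfold dX at hq
  rw [AddMonoidAlgebra.coeff_finsuppSum] at hq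
  simp only [AddMonoidAlgebra.coeff_single] at hq
  have := Finsupp.support_sum hq
  rw [Finset.mem_biUnion] at this
  obtain ⟨p, hp, hmem⟩ := this
  have := Finsupp.support_single_subset hmem
  simp only [Finset.mem_singleton] at this
  exact ⟨p, hp, this⟩

lemma support_dY {A : Ll K} {q : ℤ × ℕ} (hq : q ∈ (dY A).coeff.support) :
    ∃ p ∈ A.coeff.support, 1 ≤ p.2 ∧ q = (p.1, p.2 - 1) := by
  unfold dY at hq
  rw [AddMonoidAlgebra.coeff_finsuppSum] at hq
  simp only [AddMonoidAlgebra.coeff_single] at hq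
  have := Finsupp.support_sum hq
  rw [Finset.mem_biUnion] at this
  obtain ⟨p, hp, hmem⟩ := this
  have h1 := Finsupp.support_single_subset hmem
  simp only [Finset.mem_singleton] at h1
  have h2 : A.coeff p * (p.2 : K) ≠ 0 := by
    intro h
    rw [h1] at hmem
    rw [Finsupp.mem_support_iff] at hmem
    exact hmem (by rw [Finsupp.single_apply, if_pos rfl, h])
  have h3 : p.2 ≠ 0 := by
    intro h
    apply h2
    rw [h]
    simp
  exact ⟨p, hp, Nat.one_le_iff_ne_zero.mpr h3, h1⟩

lemma dg_shift_dX (hl : 0 < l) (p : ℤ × ℕ) :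
    dg l ρ σ (p.1 - (l : ℤ), p.2) = dg l ρ σ p - ρ := by
  unfold dg
  have hl0 : (l : ℚ) ≠ 0 := by positivity
  push_cast
  field_simp
  ring

lemma dg_shift_dY {p : ℤ × ℕ} (hp : 1 ≤ p.2) :
    dg l ρ σ (p.1, p.2 - 1) = dg l ρ σ p - σ := by
  unfold dg
  have : ((p.2 - 1 : ℕ) : ℚ) = (p.2 : ℚ) - 1 := by
    push_cast [hp]
    ring
  rw [this]
  push_cast
  ring

lemma vle_dX (hl : 0 < l) {A : Ll K} {d : ℚ} (h : vle l ρ σ A d) :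
    vle l ρ σ (dX l A) (d - ρ) := by
  intro q hq
  obtain ⟨p, hp, rfl⟩ := support_dX hq
  rw [dg_shift_dX hl]
  exact sub_le_sub_right (h p hp) _

lemma vlt_dX (hl : 0 < l) {A : Ll K} {d : ℚ} (h : vlt l ρ σ A d) :
    vlt l ρ σ (dX l A) (d - ρ) := by
  intro q hq
  obtain ⟨p, hp, rfl⟩ := support_dX hq
  rw [dg_shift_dX hl]
  exact sub_lt_sub_right (h p hp) _

lemma Hg_dX (hl : 0 < l) {A : Ll K} {d : ℚ} (h : Hg l ρ σ d A) :
    Hg l ρ σ (d - ρ) (dX l A) := by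
  intro q hq
  obtain ⟨p, hp, rfl⟩ := support_dX hq
  rw [dg_shift_dX hl, h p hp]

lemma vle_dY {A : Ll K} {d : ℚ} (h : vle l ρ σ A d) :
    vle l ρ σ (dY A) (d - σ) := by
  intro q hq
  obtain ⟨p, hp, h1, rfl⟩ := support_dY hq
  rw [dg_shift_dY h1]
  exact sub_le_sub_right (h p hp) _

lemma vlt_dY {A : Ll K} {d : ℚ} (h : vlt l ρ σ A d) :
    vlt l ρ σ (dY A) (d - σ) := by
  intro q hq
  obtain ⟨p, hp, h1, rfl⟩ := support_dY hq
  rw [dg_shift_dY h1]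
  exact sub_lt_sub_right (h p hp) _

lemma Hg_dY {A : Ll K} {d : ℚ} (h : Hg l ρ σ d A) :
    Hg l ρ σ (d - σ) (dY A) := by
  intro q hq
  obtain ⟨p, hp, h1, rfl⟩ := support_dY hq
  rw [dg_shift_dY h1, h p hp]

lemma vle_neg {A : Ll K} {d : ℚ} (h : vle l ρ σ A d) : vle l ρ σ (-A) d := by
  intro p hp
  rw [AddMonoidAlgebra.coeff_neg, Finsupp.support_neg] at hp
  exact h p hp

lemma vlt_neg {A : Ll K} {d : ℚ} (h : vlt l ρ σ A d) : vlt l ρ σ (-A) d := by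
  intro p hp
  rw [AddMonoidAlgebra.coeff_neg, Finsupp.support_neg] at hp
  exact h p hp

lemma Hg_sub {A B : Ll K} {d : ℚ} (hA : Hg l ρ σ d A) (hB : Hg l ρ σ d B) :
    Hg l ρ σ d (A - B) := by
  rw [sub_eq_add_neg]; exact Hg_add hA (Hg_neg hB)

lemma vle_sub {A B : Ll K} {d : ℚ} (hA : vle l ρ σ A d) (hB : vle l ρ σ B d) :
    vle l ρ σ (A - B) d := by
  rw [sub_eq_add_neg]; exact vle_add hA (vle_neg hB)

lemma vlt_sub {A B : Ll K} {d : ℚ} (hA : vlt l ρ σ A d) (hB : vlt l ρ σ B d) :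
    vlt l ρ σ (A - B) d := by
  rw [sub_eq_add_neg]; exact vlt_add hA (vlt_neg hB)

lemma Hg_br (hl : 0 < l) {A B : Ll K} {a b : ℚ} (hA : Hg l ρ σ a A) (hB : Hg l ρ σ b B) :
    Hg l ρ σ (a + b - ρ - σ) (br l A B) := by
  have h1 : Hg l ρ σ ((a - ρ) + (b - σ)) (dX l A * dY B) := Hg_mul (Hg_dX hl hA) (Hg_dY hB)
  have h2 : Hg l ρ σ ((a - σ) + (b - ρ)) (dY A * dX l B) := Hg_mul (Hg_dY hA) (Hg_dX hl hB)
  rw [br_def']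
  have e1 : (a - ρ) + (b - σ) = a + b - ρ - σ := by ring
  have e2 : (a - σ) + (b - ρ) = a + b - ρ - σ := by ring
  rw [e1] at h1; rw [e2] at h2
  exact Hg_sub h1 h2

lemma vlt_br_left (hl : 0 < l) {A B : Ll K} {a b : ℚ}
    (hA : vlt l ρ σ A a) (hB : vle l ρ σ B b) :
    vlt l ρ σ (br l A B) (a + b - ρ - σ) := by
  have h1 := vlt_mul_of_lt_le (vlt_dX hl hA) (vle_dY hB)
  have h2 := vlt_mul_of_lt_le (vlt_dY hA) (vle_dX hl hB)
  rw [br_def']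
  have e1 : (a - ρ) + (b - σ) = a + b - ρ - σ := by ring
  have e2 : (a - σ) + (b - ρ) = a + b - ρ - σ := by ring
  rw [e1] at h1; rw [e2] at h2
  exact vlt_sub h1 h2

lemma vlt_br_right (hl : 0 < l) {A B : Ll K} {a b : ℚ}
    (hA : vle l ρ σ A a) (hB : vlt l ρ σ B b) :
    vlt l ρ σ (br l A B) (a + b - ρ - σ) := by
  have h1 := vlt_mul_of_le_lt (vle_dX hl hA) (vlt_dY hB)
  have h2 := vlt_mul_of_le_lt (vle_dY hA) (vlt_dX hl hB)
  rw [br_def']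
  have e1 : (a - ρ) + (b - σ) = a + b - ρ - σ := by ring
  have e2 : (a - σ) + (b - ρ) = a + b - ρ - σ := by ring
  rw [e1] at h1; rw [e2] at h2
  exact vlt_sub h1 h2

lemma br_add_right (l' : ℕ) (A B C : Ll K) :
    br l' A (B + C) = br l' A B + br l' A C := by
  rw [br_antisymm, br_add_left, br_antisymm l' B A, br_antisymm l' C A]
  ring

lemma vle_of_Hg {A : Ll K} {d : ℚ} (h : Hg l ρ σ d A) : vle l ρ σ A d :=
  fun p hp => le_of_eq (h p hp)

lemma vq_lt_of_vlt {A : Ll K} {d : ℚ} (hA : A ≠ 0) (h : vlt l ρ σ A d) :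
    vq l ρ σ A < d := by
  obtain ⟨p, hp, he⟩ := exists_dg_eq_vq (l := l) (ρ := ρ) (σ := σ) hA
  rw [← he]
  exact h p hp

lemma vlt_of_vq_lt {A : Ll K} {d : ℚ} (hA : A ≠ 0) (h : vq l ρ σ A < d) :
    vlt l ρ σ A d := fun p hp => lt_of_le_of_lt (vle_vq hA p hp) h

/-- Case 1: leading brackets don't vanish. -/
lemma lead_br_of_ne (hl : 0 < l) {A B : Ll K} (hA : A ≠ 0) (hB : B ≠ 0)
    (h : br l (lead l ρ σ A) (lead l ρ σ B) ≠ 0) :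
    br l A B ≠ 0 ∧
      vq l ρ σ (br l A B) = vq l ρ σ A + vq l ρ σ B - ρ - σ ∧
      lead l ρ σ (br l A B) = br l (lead l ρ σ A) (lead l ρ σ B) := by
  set a := vq l ρ σ A
  set b := vq l ρ σ B
  set LA := lead l ρ σ A
  set LB := lead l ρ σ B
  have hdec : br l A B = br l LA LB + (br l LA (B - LB) + br l (A - LA) B) := by
    have h1 : br l A B = br l LA B + br l (A - LA) B := by
      rw [← br_add_left]; congr 1; ring
    have h2 : br l LA B = br l LA LB + br l LA (B - LB) := by
      rw [← br_add_right]; congr 1; ring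
    rw [h1, h2]; ring
  have hHg : Hg l ρ σ (a + b - ρ - σ) (br l LA LB) := Hg_br hl (Hg_lead hA) (Hg_lead hB)
  have hE : vlt l ρ σ (br l LA (B - LB) + br l (A - LA) B) (a + b - ρ - σ) := by
    apply vlt_add
    · exact vlt_br_right hl (vle_of_Hg (Hg_lead hA)) (vlt_sub_lead hB)
    · exact vlt_br_left hl (vlt_sub_lead hA) (vle_vq hB)
  have := lead_eq_of_decomp (l := l) (ρ := ρ) (σ := σ) h hHg hE
  rw [← hdec] at this
  exact this

/-- Case 2: leading brackets vanish: strict degree drop. -/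
lemma vlt_br_of_eq (hl : 0 < l) {A B : Ll K} (hA : A ≠ 0) (hB : B ≠ 0)
    (h : br l (lead l ρ σ A) (lead l ρ σ B) = 0) :
    vlt l ρ σ (br l A B) (vq l ρ σ A + vq l ρ σ B - ρ - σ) := by
  set a := vq l ρ σ A
  set b := vq l ρ σ B
  set LA := lead l ρ σ A
  set LB := lead l ρ σ B
  have hdec : br l A B = br l LA LB + (br l LA (B - LB) + br l (A - LA) B) := by
    have h1 : br l A B = br l LA B + br l (A - LA) B := by
      rw [← br_add_left]; congr 1; ring
    have h2 : br l LA B = br l LA LB + br l LA (B - LB) := by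
      rw [← br_add_right]; congr 1; ring
    rw [h1, h2]; ring
  rw [hdec, h, zero_add]
  apply vlt_add
  · exact vlt_br_right hl (vle_of_Hg (Hg_lead hA)) (vlt_sub_lead hB)
  · exact vlt_br_left hl (vlt_sub_lead hA) (vle_vq hB)


end

section



/-- weight (Euler-type) operator with weight `α·i + β·j` on `x^(i/l) y^j`. -/
def eW (α β : K) (A : Ll K) : Ll K :=
  Finsupp.sum A.coeff fun p c => AddMonoidAlgebra.single p (c * (α * (p.1 : K) + β * (p.2 : K)))

lemma eW_single (α β : K) (p : ℤ × ℕ) (c : K) :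
    eW α β (AddMonoidAlgebra.single p c) = AddMonoidAlgebra.single p (c * (α * (p.1:K) + β * (p.2:K))) := by
  unfold eW
  exact Finsupp.sum_single_index (by simp)

lemma eW_add (α β : K) (A B : Ll K) : eW α β (A + B) = eW α β A + eW α β B := by
  unfold eW
  rw [AddMonoidAlgebra.coeff_add]
  apply Finsupp.sum_add_index (by simp) (by intros; rw [add_mul, AddMonoidAlgebra.single_add])

lemma eW_smul (α β c : K) (A : Ll K) : eW α β (c • A) = c • eW α β A := by
  unfold eW
  rw [AddMonoidAlgebra.coeff_smul, Finsupp.sum_smul_index' (by simp), Finsupp.smul_sum]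
  exact Finsupp.sum_congr fun p hp => by
    rw [AddMonoidAlgebra.smul_single, smul_eq_mul, smul_eq_mul, mul_assoc]

@[simp] lemma eW_zero (α β : K) : eW α β (0 : Ll K) = 0 := by unfold eW; simp

lemma eW_apply (α β : K) (A : Ll K) (q : ℤ × ℕ) :
    (eW α β A).coeff q = A.coeff q * (α * (q.1:K) + β * (q.2:K)) := by
  induction A using AddMonoidAlgebra.induction_linear with
  | zero => simp
  | add f g hf hg => rw [eW_add, AddMonoidAlgebra.coeff_add, Finsupp.add_apply, hf, hg,
      AddMonoidAlgebra.coeff_add, Finsupp.add_apply, add_mul]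
  | single p a =>
      rw [eW_single, AddMonoidAlgebra.coeff_single, AddMonoidAlgebra.coeff_single,
        Finsupp.single_apply, Finsupp.single_apply]
      split
      · next h => subst h; rfl
      · simp

lemma eW_mul (α β : K) (A B : Ll K) :
    eW α β (A * B) = eW α β A * B + A * eW α β B := by
  induction A using AddMonoidAlgebra.induction_linear with
  | zero => simp
  | add f g hf hg => rw [add_mul, eW_add, hf, hg, eW_add, add_mul]; ring
  | single p a =>
      induction B using AddMonoidAlgebra.induction_linear with
      | zero => simp
      | add f g hf hg => rw [mul_add, eW_add, hf, hg, eW_add, mul_add]; ring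
      | single q b =>
          rw [AddMonoidAlgebra.single_mul_single, eW_single, eW_single, eW_single,
            AddMonoidAlgebra.single_mul_single, AddMonoidAlgebra.single_mul_single,
            ← AddMonoidAlgebra.single_add]
          congr 1
          have h1 : ((p+q).1 : K) = (p.1:K) + (q.1:K) := by
            rw [show (p+q).1 = p.1 + q.1 from rfl]; push_cast; ring
          have h2 : ((p+q).2 : K) = (p.2:K) + (q.2:K) := by
            rw [show (p+q).2 = p.2 + q.2 from rfl]; push_cast; ring
          rw [h1, h2]
          ring

/-- `eW` as a derivation. -/
def eWD (α β : K) : Derivation K (Ll K) (Ll K) where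
  toFun := eW α β
  map_add' := eW_add α β
  map_smul' c A := by simp [eW_smul]
  map_one_eq_zero' := by
    show eW α β (AddMonoidAlgebra.single (0 : ℤ×ℕ) (1:K)) = 0
    rw [eW_single]
    simp
  leibniz' A B := by
    show eW α β (A * B) = A • eW α β B + B • eW α β A
    rw [eW_mul]
    simp only [smul_eq_mul]
    ring

lemma eWD_apply (α β : K) (A : Ll K) : eWD α β A = eW α β A := rfl

lemma eW_pow (α β : K) (A : Ll K) (n : ℕ) :
    eW α β (A ^ n) = (n : K) • (A ^ (n-1) * eW α β A) := by
  have := (eWD α β).leibniz_pow A n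
  rw [eWD_apply, eWD_apply] at this
  rw [this, smul_eq_mul, ← Nat.cast_smul_eq_nsmul K]

/-- Euler identity for homogeneous elements. -/
lemma euler {l : ℕ} {ρ σ : ℤ} (hl : 0 < l) {A : Ll K} {d : ℚ} (h : Hg l ρ σ d A) :
    eW ((ρ:K)/(l:K)) (σ:K) A = ((d : ℚ) : K) • A := by
  ext q
  rw [eW_apply, AddMonoidAlgebra.coeff_smul, Finsupp.smul_apply, smul_eq_mul, mul_comm ((d:ℚ):K) _]
  by_cases hq : q ∈ A.coeff.support
  · congr 1
    have hd := h q hq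
    unfold dg at hd
    have : ((ρ:ℚ) * ((q.1:ℚ)/(l:ℚ)) + (σ:ℚ) * (q.2:ℚ) : ℚ) = d := hd
    calc (ρ:K)/(l:K) * (q.1:K) + (σ:K)*(q.2:K)
        = (((ρ:ℚ) * ((q.1:ℚ)/(l:ℚ)) + (σ:ℚ) * (q.2:ℚ) : ℚ) : K) := by push_cast; ring
      _ = ((d:ℚ):K) := by rw [this]
  · rw [Finsupp.notMem_support_iff.mp hq]
    ring

/-- the three weight operators we use. -/
lemma eW_combo (α β a b : K) (A : Ll K) :
    eW (a * α) (a * β) A = a • eW α β A ∧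
    eW (α + a) (β + b) A = eW α β A + eW a b A := by
  constructor
  · ext q; rw [eW_apply, AddMonoidAlgebra.coeff_smul, Finsupp.smul_apply, eW_apply, smul_eq_mul]; ring
  · ext q; rw [eW_apply, AddMonoidAlgebra.coeff_add, Finsupp.add_apply, eW_apply, eW_apply]; ring

/-- `x^(i/l) y^j ↦ i` weight as `xVar * dX` (up to factor `l`). -/
lemma eW_10_eq (l : ℕ) (hl : 0 < l) (A : Ll K) :
    eW (1:K) 0 A = (l : K) • (xVar l * dX l A) := by
  induction A using AddMonoidAlgebra.induction_linear with
  | zero => simp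
  | add f g hf hg => rw [eW_add, dX_add, mul_add, smul_add, hf, hg]
  | single p c =>
      rw [eW_single, dX_single]
      unfold xVar
      rw [AddMonoidAlgebra.single_mul_single, AddMonoidAlgebra.smul_single]
      have he : ((l:ℤ), (0:ℕ)) + (p.1 - (l:ℤ), p.2) = p := by
        simp [Prod.ext_iff]
      rw [he]
      congr 1
      have hl0 : (l : K) ≠ 0 := Nat.cast_ne_zero.mpr hl.ne'
      simp only [smul_eq_mul, zero_mul, add_zero]
      field_simp

lemma eW_01_eq (A : Ll K) : eW (0:K) 1 A = yVar * dY A := by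
  induction A using AddMonoidAlgebra.induction_linear with
  | zero => simp
  | add f g hf hg => rw [eW_add, dY_add, mul_add, hf, hg]
  | single p c =>
      rw [eW_single, dY_single]
      unfold yVar
      rw [AddMonoidAlgebra.single_mul_single, one_mul]
      rcases Nat.eq_zero_or_pos p.2 with hp | hp
      · rw [hp]
        simp
      · have he : ((0:ℤ), (1:ℕ)) + (p.1, p.2 - 1) = p := by
          simp [Prod.ext_iff]; omega
        rw [he]
        congr 1
        ring

/-- if the bracket of `R` and `S` vanishes, the basic weight operators intertwine. -/
lemma eW_swap {l : ℕ} (hl : 0 < l) {R S : Ll K} (h : br l R S = 0) :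
    eW (1:K) 0 R * eW 0 1 S = eW 0 1 R * eW (1:K) 0 S := by
  rw [eW_10_eq l hl, eW_01_eq, eW_10_eq l hl, eW_01_eq]
  have : xVar l * dX l R * (yVar * dY S) - yVar * dY R * (xVar l * dX l S)
      = (xVar l * yVar) * (br l R S) := by
    rw [br_def']; ring
  have h2 : xVar l * dX l R * (yVar * dY S) = yVar * dY R * (xVar l * dX l S) := by
    have := sub_eq_zero.mp (by rw [this, h, mul_zero])
    exact this
  rw [smul_mul_assoc, mul_smul_comm, h2]

section prop21
variable {l : ℕ} {ρ σ : ℤ}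
variable {R S : Ll K} {r s : ℚ}

/-- Key identity: `r • (R * eW S) = s • (S * eW R)` for homogeneous commuting `R,S`. -/
lemma key_identity (hl : 0 < l) (hR : Hg l ρ σ r R) (hS : Hg l ρ σ s S)
    (hbr : br l R S = 0) (α β : K) :
    ((r:ℚ):K) • (R * eW α β S) = ((s:ℚ):K) • (S * eW α β R) := by
  have swap := eW_swap hl hbr
  set c1 : Ll K := algebraMap K (Ll K) ((ρ:K)/(l:K)) with hc1
  set c2 : Ll K := algebraMap K (Ll K) ((σ:K)) with hc2
  have ex : ∀ (α' β' : K) (T : Ll K),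
      eW α' β' T = algebraMap K (Ll K) α' * eW (1:K) 0 T + algebraMap K (Ll K) β' * eW (0:K) 1 T := by
    intro α' β' T
    rw [← Algebra.smul_def, ← Algebra.smul_def]
    ext q
    rw [eW_apply, AddMonoidAlgebra.coeff_add, Finsupp.add_apply, AddMonoidAlgebra.coeff_smul,
      AddMonoidAlgebra.coeff_smul, Finsupp.smul_apply, Finsupp.smul_apply,
      eW_apply, eW_apply, smul_eq_mul, smul_eq_mul]
    ring
  have eAR : algebraMap K (Ll K) ((r:ℚ):K) * R = c1 * eW (1:K) 0 R + c2 * eW (0:K) 1 R := by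
    rw [← Algebra.smul_def, ← euler hl hR, ex]
  have eAS : algebraMap K (Ll K) ((s:ℚ):K) * S = c1 * eW (1:K) 0 S + c2 * eW (0:K) 1 S := by
    rw [← Algebra.smul_def, ← euler hl hS, ex]
  rw [Algebra.smul_def, Algebra.smul_def, ex α β S, ex α β R]
  set aR := algebraMap K (Ll K) ((r:ℚ):K)
  set aS := algebraMap K (Ll K) ((s:ℚ):K)
  set ha := algebraMap K (Ll K) α
  set hb := algebraMap K (Ll K) β
  set xR := eW (1:K) 0 R
  set xS := eW (1:K) 0 S
  set yR := eW (0:K) 1 R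
  set yS := eW (0:K) 1 S
  linear_combination (ha * xS + hb * yS) * eAR - (ha * xR + hb * yR) * eAS
    + (hb * c1 - ha * c2) * swap

end prop21


end

section



/-- supported on the x-axis. -/
def onAxis (f : Ll K) : Prop := ∀ p ∈ f.coeff.support, p.2 = 0

lemma support_eW (α β : K) (A : Ll K) : (eW α β A).coeff.support ⊆ A.coeff.support := by
  intro p hp
  rw [Finsupp.mem_support_iff] at hp ⊢
  intro h
  rw [eW_apply, h, zero_mul] at hp
  exact hp rfl

lemma onAxis_eW (α β : K) {A : Ll K} (h : onAxis A) : onAxis (eW α β A) :=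
  fun p hp => h p (support_eW α β A hp)

lemma mul_apply_extreme {f g : Ll K} {zM zN : ℤ}
    (hf : onAxis f) (hg : onAxis g)
    (hM : ∀ p ∈ f.coeff.support, p.1 ≤ zM) (hN : ∀ p ∈ g.coeff.support, p.1 ≤ zN) :
    (f * g).coeff ((zM + zN, 0) : ℤ × ℕ) = f.coeff (zM, 0) * g.coeff (zN, 0) := by
  have step : ∀ p ∈ f.coeff.support,
      (∑ q ∈ g.coeff.support, if p + q = ((zM + zN, 0) : ℤ×ℕ) then f.coeff p * g.coeff q else 0)
        = if p = ((zM, 0) : ℤ×ℕ) then f.coeff p * g.coeff ((zN, 0) : ℤ×ℕ) else 0 := by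
    intro p hp
    by_cases hpM : p = ((zM, 0) : ℤ×ℕ)
    · subst hpM
      rw [if_pos rfl]
      have hcond : ∀ q : ℤ×ℕ, (((zM, 0) : ℤ×ℕ) + q = ((zM + zN, 0) : ℤ×ℕ)) ↔ q = ((zN, 0) : ℤ×ℕ) := by
        intro q
        constructor
        · intro h
          have h1 : zM + q.1 = zM + zN := congrArg Prod.fst h
          have h2 : 0 + q.2 = 0 := congrArg Prod.snd h
          rw [Prod.ext_iff]
          constructor
          · omega
          · omega
        · intro h; subst h; rfl
      refine Eq.trans (Finset.sum_congr rfl fun q _ => if_congr (hcond q) rfl rfl) ?_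
      rw [Finset.sum_ite_eq' g.coeff.support ((zN, 0) : ℤ×ℕ) (fun q => f.coeff ((zM,0):ℤ×ℕ) * g.coeff q)]
      split
      · rfl
      · next h => rw [Finsupp.notMem_support_iff.mp h, mul_zero]
    · rw [if_neg hpM]
      apply Finset.sum_eq_zero
      intro q hq
      rw [if_neg]
      intro h
      have h1 : p.1 + q.1 = zM + zN := congrArg Prod.fst h
      have hp2 : p.2 = 0 := hf p hp
      have hp1 : p.1 ≤ zM := hM p hp
      have hq1 : q.1 ≤ zN := hN q hq
      have : p.1 = zM := by omega
      exact hpM (by rw [Prod.ext_iff]; exact ⟨this, hp2⟩)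
  rw [AddMonoidAlgebra.coeff_mul]
  show (∑ p ∈ f.coeff.support, ∑ q ∈ g.coeff.support,
      if p + q = ((zM + zN, 0) : ℤ×ℕ) then f.coeff p * g.coeff q else 0) = f.coeff (zM,0) * g.coeff (zN,0)
  rw [Finset.sum_congr rfl step]
  rw [Finset.sum_ite_eq' f.coeff.support ((zM, 0) : ℤ×ℕ) (fun p => f.coeff p * g.coeff ((zN, 0):ℤ×ℕ))]
  split
  · rfl
  · next h => rw [Finsupp.notMem_support_iff.mp h, zero_mul]

-- on the axis, with (l,ρ,σ) = (1,1,0), the degree of p is p.1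
lemma dg_axis (p : ℤ × ℕ) : dg 1 1 0 p = (p.1 : ℚ) := by
  unfold dg; simp

/-- the one-variable proportionality lemma, on the x-axis of `Ll`. -/
lemma axis_prop {f g : Ll K} (hf : f ≠ 0) (hg : g ≠ 0)
    (haf : onAxis f) (hag : onAxis g)
    (E : eW (1:K) 0 f * g = f * eW (1:K) 0 g) :
    ∃ lam : K, lam ≠ 0 ∧ f = lam • g := by
  -- top exponents
  obtain ⟨pM, hpM, hdM⟩ := exists_dg_eq_vq (l := 1) (ρ := 1) (σ := 0) hf
  obtain ⟨pN, hpN, hdN⟩ := exists_dg_eq_vq (l := 1) (ρ := 1) (σ := 0) hg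
  set zM := pM.1
  set zN := pN.1
  have hpM' : pM = ((zM, 0) : ℤ×ℕ) := by
    rw [Prod.ext_iff]; exact ⟨rfl, haf pM hpM⟩
  have hpN' : pN = ((zN, 0) : ℤ×ℕ) := by
    rw [Prod.ext_iff]; exact ⟨rfl, hag pN hpN⟩
  have hfM : f.coeff (zM, 0) ≠ 0 := by rw [← hpM']; exact Finsupp.mem_support_iff.mp hpM
  have hgN : g.coeff (zN, 0) ≠ 0 := by rw [← hpN']; exact Finsupp.mem_support_iff.mp hpN
  have hMle : ∀ p ∈ f.coeff.support, p.1 ≤ zM := by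
    intro p hp
    have := vle_vq (l := 1) (ρ := 1) (σ := 0) hf p hp
    rw [dg_axis, ← hdM, dg_axis] at this
    exact_mod_cast this
  have hNle : ∀ p ∈ g.coeff.support, p.1 ≤ zN := by
    intro p hp
    have := vle_vq (l := 1) (ρ := 1) (σ := 0) hg p hp
    rw [dg_axis, ← hdN, dg_axis] at this
    exact_mod_cast this
  -- coefficient of E at (zM + zN, 0)
  have hE := Finsupp.ext_iff.mp (congrArg AddMonoidAlgebra.coeff E) ((zM + zN, 0) : ℤ×ℕ)
  rw [mul_apply_extreme (onAxis_eW _ _ haf) hag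
      (fun p hp => hMle p (support_eW _ _ f hp)) hNle,
    mul_apply_extreme haf (onAxis_eW _ _ hag) hMle
      (fun p hp => hNle p (support_eW _ _ g hp))] at hE
  rw [eW_apply, eW_apply] at hE
  -- (zM - zN) * f_M * g_N = 0
  have hMN : zM = zN := by
    have hcancel : (zM:K) * (f.coeff (zM,0) * g.coeff (zN,0)) = (zN:K) * (f.coeff (zM,0) * g.coeff (zN,0)) := by
      linear_combination hE
    have h2 : (zM:K) = (zN:K) := mul_right_cancel₀ (mul_ne_zero hfM hgN) hcancel
    exact_mod_cast h2
  -- the difference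
  set h := g.coeff (zN,0) • f - f.coeff (zM,0) • g with hh
  by_cases hzero : h = 0
  · refine ⟨f.coeff (zM,0) / g.coeff (zN,0), div_ne_zero hfM hgN, ?_⟩
    have : g.coeff (zN,0) • f = f.coeff (zM,0) • g := by
      have := sub_eq_zero.mp hzero
      exact this
    calc f = (g.coeff (zN,0))⁻¹ • (g.coeff (zN,0) • f) := by rw [smul_smul, inv_mul_cancel₀ hgN, one_smul]
      _ = (g.coeff (zN,0))⁻¹ • (f.coeff (zM,0) • g) := by rw [this]
      _ = (f.coeff (zM,0) / g.coeff (zN,0)) • g := by rw [smul_smul, div_eq_inv_mul]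
  · exfalso
    have hah : onAxis h := by
      intro p hp
      have := Finsupp.support_add (by
        rw [hh, sub_eq_add_neg, AddMonoidAlgebra.coeff_add, AddMonoidAlgebra.coeff_neg,
          AddMonoidAlgebra.coeff_smul, AddMonoidAlgebra.coeff_smul] at hp; exact hp)
      rcases Finset.mem_union.mp this with h1 | h1
      · exact haf p (Finsupp.support_smul h1)
      · rw [Finsupp.support_neg] at h1
        exact hag p (Finsupp.support_smul h1)
    have hHle : ∀ p ∈ h.coeff.support, p.1 ≤ zM := by
      intro p hp
      have := Finsupp.support_add (by
        rw [hh, sub_eq_add_neg, AddMonoidAlgebra.coeff_add, AddMonoidAlgebra.coeff_neg,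
          AddMonoidAlgebra.coeff_smul, AddMonoidAlgebra.coeff_smul] at hp; exact hp)
      rcases Finset.mem_union.mp this with h1 | h1
      · exact hMle p (Finsupp.support_smul h1)
      · rw [Finsupp.support_neg] at h1
        rw [hMN]
        exact hNle p (Finsupp.support_smul h1)
    -- top of h
    obtain ⟨pH, hpH, hdH⟩ := exists_dg_eq_vq (l := 1) (ρ := 1) (σ := 0) hzero
    set zH := pH.1
    have hpH' : pH = ((zH, 0) : ℤ×ℕ) := by
      rw [Prod.ext_iff]; exact ⟨rfl, hah pH hpH⟩
    have hhH : h.coeff (zH, 0) ≠ 0 := by rw [← hpH']; exact Finsupp.mem_support_iff.mp hpH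
    have hHle' : ∀ p ∈ h.coeff.support, p.1 ≤ zH := by
      intro p hp
      have := vle_vq (l := 1) (ρ := 1) (σ := 0) hzero p hp
      rw [dg_axis, ← hdH, dg_axis] at this
      exact_mod_cast this
    -- relation for h
    have hrel : eW (1:K) 0 f * h = f * eW (1:K) 0 h := by
      have e1 : eW (1:K) 0 h = g.coeff (zN,0) • eW (1:K) 0 f - f.coeff (zM,0) • eW (1:K) 0 g := by
        rw [hh, sub_eq_add_neg, eW_add, eW_smul]
        rw [show -(f.coeff (zM,0) • g) = (-(f.coeff (zM,0))) • g from by rw [neg_smul], eW_smul, neg_smul]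
        rw [sub_eq_add_neg]
      rw [hh, e1]
      rw [mul_sub, mul_sub, mul_smul_comm, mul_smul_comm, mul_smul_comm, mul_smul_comm, E,
        mul_comm (eW (1:K) 0 f) f]
    -- coefficient at (zM + zH, 0)
    have hE2 := Finsupp.ext_iff.mp (congrArg AddMonoidAlgebra.coeff hrel) ((zM + zH, 0) : ℤ×ℕ)
    rw [mul_apply_extreme (onAxis_eW _ _ haf) hah
        (fun p hp => hMle p (support_eW _ _ f hp)) hHle',
      mul_apply_extreme haf (onAxis_eW _ _ hah) hMle
        (fun p hp => hHle' p (support_eW _ _ h hp))] at hE2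
    rw [eW_apply, eW_apply] at hE2
    have hzMH : zM = zH := by
      have hcancel : (zM:K) * (f.coeff (zM,0) * h.coeff (zH,0)) = (zH:K) * (f.coeff (zM,0) * h.coeff (zH,0)) := by
        linear_combination hE2
      have h2 : (zM:K) = (zH:K) := mul_right_cancel₀ (mul_ne_zero hfM hhH) hcancel
      exact_mod_cast h2
    -- but h vanishes at (zM, 0)
    apply hhH
    rw [← hzMH, hh]
    rw [AddMonoidAlgebra.coeff_sub, AddMonoidAlgebra.coeff_smul, AddMonoidAlgebra.coeff_smul,
      Finsupp.sub_apply, Finsupp.smul_apply, Finsupp.smul_apply]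
    rw [hMN, smul_eq_mul, smul_eq_mul]
    ring

end

section


variable {l : ℕ} {ρ σ : ℤ}
variable {R S : Ll K} {r s : ℚ}

lemma algebraMap_ne_zero {c : K} (hc : c ≠ 0) : algebraMap K (Ll K) c ≠ 0 := by
  rw [algebraMap_eq_single]
  exact fun h => hc (AddMonoidAlgebra.single_eq_zero.mp h)

lemma ratCast_ne_zero {q : ℚ} (hq : q ≠ 0) : ((q : ℚ) : K) ≠ 0 := by exact_mod_cast hq

/-- elements killed by both weight operators are constants. -/
lemma const_of_eW_zero {A : Ll K} (h1 : eW (1:K) 0 A = 0) (h2 : eW (0:K) 1 A = 0) :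
    A = algebraMap K (Ll K) (A.coeff 0) := by
  rw [algebraMap_eq_single]
  rw [← AddMonoidAlgebra.coeff_inj, AddMonoidAlgebra.coeff_single, ← Finsupp.support_subset_singleton]
  intro p hp
  rw [Finsupp.mem_support_iff] at hp
  have e1 := Finsupp.ext_iff.mp (congrArg AddMonoidAlgebra.coeff h1) p
  have e2 := Finsupp.ext_iff.mp (congrArg AddMonoidAlgebra.coeff h2) p
  rw [eW_apply] at e1 e2
  simp only [one_mul, zero_mul, add_zero, zero_add, AddMonoidAlgebra.coeff_zero, Finsupp.coe_zero, Pi.zero_apply] at e1 e2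
  have hp1 : (p.1 : K) = 0 := by
    rcases mul_eq_zero.mp e1 with h | h
    · exact absurd h hp
    · exact h
  have hp2 : (p.2 : K) = 0 := by
    rcases mul_eq_zero.mp e2 with h | h
    · exact absurd h hp
    · exact h
  have : p.1 = 0 := by exact_mod_cast hp1
  have h2' : p.2 = 0 := by exact_mod_cast hp2
  rw [Finset.mem_singleton, Prod.ext_iff]
  exact ⟨this, h2'⟩

/-- P2: `s = 0` case: `S` is a nonzero constant. -/
lemma prop_s_zero (hl : 0 < l) (hR : Hg l ρ σ r R) (hS : Hg l ρ σ s S)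
    (hbr : br l R S = 0) (hr : r ≠ 0) (hR0 : R ≠ 0) (hS0 : S ≠ 0) (hs : s = 0) :
    ∃ lam : K, lam ≠ 0 ∧ S = algebraMap K (Ll K) lam := by
  have key : ∀ α β : K, eW α β S = 0 := by
    intro α β
    have h := key_identity hl hR hS hbr α β
    rw [hs] at h
    simp only [Rat.cast_zero, zero_smul] at h
    have h2 : R * eW α β S = 0 := by
      have hrk : ((r:ℚ):K) ≠ 0 := ratCast_ne_zero hr
      rcases smul_eq_zero.mp h with h' | h'
      · exact absurd h' hrk
      · exact h'
    rcases mul_eq_zero.mp h2 with h' | h'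
    · exact absurd h' hR0
    · exact h'
  refine ⟨S.coeff 0, ?_, ?_⟩
  · intro h
    apply hS0
    have := const_of_eW_zero (key 1 0) (key 0 1)
    rw [this, h, map_zero]
  · exact const_of_eW_zero (key 1 0) (key 0 1)

section powers
variable (hl : 0 < l) (hR : Hg l ρ σ r R) (hS : Hg l ρ σ s S)
  (hbr : br l R S = 0) (hr : r ≠ 0) (hR0 : R ≠ 0) (hS0 : S ≠ 0)
  {a b : ℕ} (ha : 0 < a) (hb : 0 < b)

/-- mul-form of key identity. -/
lemma key_identity' (hl : 0 < l) (hR : Hg l ρ σ r R) (hS : Hg l ρ σ s S)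
    (hbr : br l R S = 0) (α β : K) :
    algebraMap K (Ll K) ((r:ℚ):K) * (R * eW α β S)
      = algebraMap K (Ll K) ((s:ℚ):K) * (S * eW α β R) := by
  rw [← Algebra.smul_def, ← Algebra.smul_def]
  exact key_identity hl hR hS hbr α β

/-- eW in algebraMap form on powers. -/
lemma eW_pow' (α β : K) (A : Ll K) (n : ℕ) :
    eW α β (A ^ n) = algebraMap K (Ll K) (n : K) * (A ^ (n-1) * eW α β A) := by
  rw [eW_pow, Algebra.smul_def]

/-- T3: the intertwining relation for powers (same-sign case). -/
lemma pow_intertwine (hl : 0 < l) (hR : Hg l ρ σ r R) (hS : Hg l ρ σ s S)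
    (hbr : br l R S = 0) (hr : r ≠ 0) {a b : ℕ} (ha : 0 < a) (hb : 0 < b)
    (hab : (a:ℚ) * s = (b:ℚ) * r) (α β : K) :
    eW α β (S ^ a) * R ^ b = S ^ a * eW α β (R ^ b) := by
  set Cr := algebraMap K (Ll K) ((r:ℚ):K) with hCr
  set Cs := algebraMap K (Ll K) ((s:ℚ):K) with hCs
  set Ca := algebraMap K (Ll K) ((a:ℕ):K) with hCa
  set Cb := algebraMap K (Ll K) ((b:ℕ):K) with hCb
  have KI := key_identity' hl hR hS hbr α β
  have hab' : Ca * Cs = Cb * Cr := by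
    rw [hCa, hCs, hCb, hCr, ← map_mul, ← map_mul]
    congr 1
    have : ((a:ℚ) * s : ℚ) = ((b:ℚ) * r : ℚ) := hab
    calc ((a:ℕ):K) * ((s:ℚ):K) = (((a:ℚ) * s : ℚ) : K) := by push_cast; ring
      _ = (((b:ℚ) * r : ℚ) : K) := by rw [this]
      _ = ((b:ℕ):K) * ((r:ℚ):K) := by push_cast; ring
  have hCr0 : Cr ≠ 0 := algebraMap_ne_zero (ratCast_ne_zero hr)
  apply mul_left_cancel₀ hCr0
  rw [eW_pow' α β S a, eW_pow' α β R b]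
  rw [show S ^ a = S ^ (a-1) * S from by rw [← pow_succ]; congr 1; omega]
  rw [show R ^ b = R ^ (b-1) * R from by rw [← pow_succ]; congr 1; omega]
  linear_combination (Ca * S^(a-1) * R^(b-1)) * KI
    + (S^(a-1) * S * R^(b-1) * eW α β R) * hab'

/-- T4: the mixed-sign case gives a constant. -/
lemma prop_mixed (hl : 0 < l) (hR : Hg l ρ σ r R) (hS : Hg l ρ σ s S)
    (hbr : br l R S = 0) (hr : r ≠ 0) (hR0 : R ≠ 0) (hS0 : S ≠ 0)
    {a b : ℕ} (ha : 0 < a) (hb : 0 < b)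
    (hab : (a:ℚ) * s + (b:ℚ) * r = 0) :
    ∃ lam : K, lam ≠ 0 ∧ S ^ a * R ^ b = algebraMap K (Ll K) lam := by
  have key : ∀ α β : K, eW α β (S ^ a * R ^ b) = 0 := by
    intro α β
    set Cr := algebraMap K (Ll K) ((r:ℚ):K) with hCr
    set Cs := algebraMap K (Ll K) ((s:ℚ):K) with hCs
    set Ca := algebraMap K (Ll K) ((a:ℕ):K) with hCa
    set Cb := algebraMap K (Ll K) ((b:ℕ):K) with hCb
    have KI := key_identity' hl hR hS hbr α β
    have hab' : Ca * Cs + Cb * Cr = 0 := by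
      rw [hCa, hCs, hCb, hCr, ← map_mul, ← map_mul, ← map_add, ← map_zero (algebraMap K (Ll K))]
      congr 1
      have : (((a:ℚ) * s + (b:ℚ) * r : ℚ) : K) = ((0:ℚ):K) := by rw [hab]
      calc ((a:ℕ):K) * ((s:ℚ):K) + ((b:ℕ):K) * ((r:ℚ):K)
          = (((a:ℚ) * s + (b:ℚ) * r : ℚ) : K) := by push_cast; ring
        _ = ((0:ℚ):K) := this
        _ = 0 := by norm_num
    have hCr0 : Cr ≠ 0 := algebraMap_ne_zero (ratCast_ne_zero hr)
    apply mul_left_cancel₀ hCr0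
    rw [mul_zero]
    rw [eW_mul, eW_pow' α β S a, eW_pow' α β R b]
    rw [show S ^ a = S ^ (a-1) * S from by rw [← pow_succ]; congr 1; omega]
    rw [show R ^ b = R ^ (b-1) * R from by rw [← pow_succ]; congr 1; omega]
    linear_combination (Ca * S^(a-1) * R^(b-1)) * KI
      + (S^(a-1) * S * R^(b-1) * eW α β R) * hab'
  refine ⟨(S ^ a * R ^ b).coeff 0, ?_, const_of_eW_zero (key 1 0) (key 0 1)⟩
  intro h
  have hne : S ^ a * R ^ b ≠ 0 := mul_ne_zero (pow_ne_zero a hS0) (pow_ne_zero b hR0)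
  apply hne
  have := const_of_eW_zero (key 1 0) (key 0 1)
  rw [this, h, map_zero]

end powers

-- the two domain maps
/-- first-coordinate projection onto the axis. -/
def phiFst : (ℤ × ℕ) →+ (ℤ × ℕ) where
  toFun p := (p.1, 0)
  map_zero' := rfl
  map_add' p q := by simp [Prod.ext_iff]

/-- second-coordinate projection onto the axis. -/
def phiSnd : (ℤ × ℕ) →+ (ℤ × ℕ) where
  toFun p := ((p.2 : ℤ), 0)
  map_zero' := rfl
  map_add' p q := by simp [Prod.ext_iff]

section mdf
variable {φf : (ℤ × ℕ) → (ℤ × ℕ)}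

lemma mdf_support {A : Ll K} :
    (AddMonoidAlgebra.mapDomain (R := K) φf A).coeff.support ⊆ A.coeff.support.image φf :=
  Finsupp.mapDomain_support

lemma mdf_add {A B : Ll K} :
    AddMonoidAlgebra.mapDomain (R := K) φf (A + B)
      = AddMonoidAlgebra.mapDomain (R := K) φf A + AddMonoidAlgebra.mapDomain (R := K) φf B :=
  AddMonoidAlgebra.mapDomain_add _ _ _

lemma mdf_smul (c : K) (A : Ll K) :
    AddMonoidAlgebra.mapDomain (R := K) φf (c • A)
      = c • AddMonoidAlgebra.mapDomain (R := K) φf A :=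
  by ext; simp [Finsupp.mapDomain_smul]

lemma mdf_zero : AddMonoidAlgebra.mapDomain (R := K) φf (0 : Ll K) = 0 :=
  AddMonoidAlgebra.mapDomain_zero _

lemma mdf_single (p : ℤ × ℕ) (c : K) :
    AddMonoidAlgebra.mapDomain (R := K) φf (AddMonoidAlgebra.single p c) = AddMonoidAlgebra.single (φf p) c :=
  AddMonoidAlgebra.mapDomain_single

lemma mdf_apply' (L : Set (ℤ × ℕ)) (A : Ll K) (hs : ↑A.coeff.support ⊆ L)
    (hinj : Set.InjOn φf L) {p : ℤ × ℕ} (hp : p ∈ L) :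
    (AddMonoidAlgebra.mapDomain (R := K) φf A).coeff (φf p) = A.coeff p :=
  Finsupp.mapDomain_apply' L A.coeff hs hinj hp

lemma mdf_injOn (L : Set (ℤ × ℕ)) (hinj : Set.InjOn φf L) {A B : Ll K}
    (hA : ↑A.coeff.support ⊆ L) (hB : ↑B.coeff.support ⊆ L)
    (h : AddMonoidAlgebra.mapDomain (R := K) φf A = AddMonoidAlgebra.mapDomain (R := K) φf B) :
    A = B :=
  AddMonoidAlgebra.coeff_injective (Finsupp.mapDomain_injOn L hinj hA hB (congrArg AddMonoidAlgebra.coeff h))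

end mdf

lemma mapDomain_eW {α β : K} (φ : (ℤ × ℕ) →+ (ℤ × ℕ))
    (hw : ∀ p : ℤ × ℕ, α * (p.1:K) + β * (p.2:K) = (((φ p).1 : ℤ) : K)) (A : Ll K) :
    AddMonoidAlgebra.mapDomain (R := K) (⇑φ) (eW α β A)
      = eW (1:K) 0 (AddMonoidAlgebra.mapDomain (R := K) (⇑φ) A) := by
  induction A using AddMonoidAlgebra.induction_linear with
  | zero => simp only [eW_zero, mdf_zero]
  | add f g hf hg => rw [eW_add, mdf_add, mdf_add, eW_add, hf, hg]
  | single p c =>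
      rw [eW_single, mdf_single, mdf_single, eW_single]
      congr 1
      rw [hw p]
      ring

/-- P3: same-sign case: `S^a = λ • R^b`. -/
lemma prop_same (hl : 0 < l) (hdir : IsDirV (ρ, σ)) (hR : Hg l ρ σ r R) (hS : Hg l ρ σ s S)
    (hbr : br l R S = 0) (hr : r ≠ 0) (hR0 : R ≠ 0) (hS0 : S ≠ 0)
    {a b : ℕ} (ha : 0 < a) (hb : 0 < b)
    (hab : (a:ℚ) * s = (b:ℚ) * r) :
    ∃ lam : K, lam ≠ 0 ∧ S ^ a = lam • R ^ b := by
  have hl0 : (l : ℚ) ≠ 0 := by positivity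
  obtain ⟨α, β, φ, hw, hax, hinj⟩ :
      ∃ (α β : K) (φ : (ℤ × ℕ) →+ (ℤ × ℕ)),
        (∀ p : ℤ × ℕ, α * (p.1:K) + β * (p.2:K) = (((φ p).1 : ℤ) : K)) ∧
        (∀ p : ℤ × ℕ, (φ p).2 = 0) ∧
        Set.InjOn φ {p : ℤ × ℕ | dg l ρ σ p = (a:ℚ) * s} := by
    by_cases hrho : ρ = 0
    · have hsig : σ ≠ 0 := by
        intro hc
        unfold IsDirV at hdir
        rw [hrho, hc] at hdir
        simp [Int.gcd] at hdir
      refine ⟨1, 0, phiFst, by intro p; show _ = ((p.1:ℤ):K); push_cast; ring,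
        fun p => rfl, ?_⟩
      intro p hp q hq hpq
      have hpq' : ((p.1, 0) : ℤ×ℕ) = ((q.1, 0) : ℤ×ℕ) := hpq
      have h1 : p.1 = q.1 := (Prod.ext_iff.mp hpq').1
      have hd : dg l ρ σ p = dg l ρ σ q := by rw [Set.mem_setOf_eq] at hp hq; rw [hp, hq]
      unfold dg at hd
      rw [hrho] at hd
      simp only [Int.cast_zero, zero_mul, zero_add] at hd
      have h2 : (p.2 : ℚ) = q.2 := by
        have hsq : (σ:ℚ) ≠ 0 := Int.cast_ne_zero.mpr hsig
        exact mul_left_cancel₀ hsq hd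
      have h2' : p.2 = q.2 := by exact_mod_cast h2
      rw [Prod.ext_iff]; exact ⟨h1, h2'⟩
    · refine ⟨0, 1, phiSnd, by intro p; show _ = ((p.2:ℤ):K); push_cast; ring,
        fun p => rfl, ?_⟩
      intro p hp q hq hpq
      have hpq' : (((p.2:ℤ), 0) : ℤ×ℕ) = (((q.2:ℤ), 0) : ℤ×ℕ) := hpq
      have h1 : ((p.2:ℤ)) = (q.2:ℤ) := (Prod.ext_iff.mp hpq').1
      have h2 : p.2 = q.2 := by exact_mod_cast h1
      have hd : dg l ρ σ p = dg l ρ σ q := by rw [Set.mem_setOf_eq] at hp hq; rw [hp, hq]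
      unfold dg at hd
      rw [h2] at hd
      have h3 : (p.1 : ℚ) = q.1 := by
        have hrr : (ρ:ℚ) ≠ 0 := Int.cast_ne_zero.mpr hrho
        have h4 := add_right_cancel hd
        have h5 := mul_left_cancel₀ hrr h4
        field_simp at h5
        exact_mod_cast h5
      have h1' : p.1 = q.1 := by exact_mod_cast h3
      rw [Prod.ext_iff]; exact ⟨h1', h2⟩
  -- setup
  set T := S ^ a with hT
  set V := R ^ b with hV
  have hT0 : T ≠ 0 := pow_ne_zero a hS0
  have hV0 : V ≠ 0 := pow_ne_zero b hR0
  have hHgT : Hg l ρ σ ((a:ℚ) * s) T := Hg_pow hS a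
  have hHgV : Hg l ρ σ ((a:ℚ) * s) V := by rw [hab]; exact Hg_pow hR b
  have E := pow_intertwine hl hR hS hbr hr ha hb hab α β
  set L : Set (ℤ × ℕ) := {p : ℤ × ℕ | dg l ρ σ p = (a:ℚ) * s} with hL
  have hsuppT : ↑T.coeff.support ⊆ L := fun p hp => hHgT p hp
  have hsuppV : ↑V.coeff.support ⊆ L := fun p hp => hHgV p hp
  set f : Ll K := AddMonoidAlgebra.mapDomain (R := K) (⇑φ) T with hf
  set g : Ll K := AddMonoidAlgebra.mapDomain (R := K) (⇑φ) V with hg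
  have hfax : onAxis f := by
    intro p hp
    have := mdf_support hp
    rw [Finset.mem_image] at this
    obtain ⟨q, hq, rfl⟩ := this
    exact hax q
  have hgax : onAxis g := by
    intro p hp
    have := mdf_support hp
    rw [Finset.mem_image] at this
    obtain ⟨q, hq, rfl⟩ := this
    exact hax q
  have hf0 : f ≠ 0 := by
    obtain ⟨p₀, hp₀⟩ := Finsupp.support_nonempty_iff.mpr (coeffNe hT0)
    intro hc
    have h1 := mdf_apply' L T hsuppT hinj (hsuppT hp₀)
    rw [← hf, hc] at h1
    simp only [AddMonoidAlgebra.coeff_zero, Finsupp.coe_zero, Pi.zero_apply] at h1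
    exact Finsupp.mem_support_iff.mp hp₀ h1.symm
  have hg0 : g ≠ 0 := by
    obtain ⟨p₀, hp₀⟩ := Finsupp.support_nonempty_iff.mpr (coeffNe hV0)
    intro hc
    have h1 := mdf_apply' L V hsuppV hinj (hsuppV hp₀)
    rw [← hg, hc] at h1
    simp only [AddMonoidAlgebra.coeff_zero, Finsupp.coe_zero, Pi.zero_apply] at h1
    exact Finsupp.mem_support_iff.mp hp₀ h1.symm
  have bridge : ∀ X Y : Ll K, AddMonoidAlgebra.mapDomain (R := K) (⇑φ) (X * Y)
      = AddMonoidAlgebra.mapDomain (R := K) (⇑φ) X * AddMonoidAlgebra.mapDomain (R := K) (⇑φ) Y :=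
    fun X Y => AddMonoidAlgebra.mapDomain_mul φ X Y
  have E' : eW (1:K) 0 f * g = f * eW (1:K) 0 g := by
    have hmapE := congrArg (AddMonoidAlgebra.mapDomain (R := K) (⇑φ)) E
    rw [bridge, bridge, mapDomain_eW φ hw, mapDomain_eW φ hw, ← hf, ← hg] at hmapE
    exact hmapE
  obtain ⟨lam, hlam, hfg⟩ := axis_prop hf0 hg0 hfax hgax E'
  refine ⟨lam, hlam, ?_⟩
  have hmap0 : AddMonoidAlgebra.mapDomain (R := K) (⇑φ) (T - lam • V) = 0 := by
    rw [sub_eq_add_neg, mdf_add,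
      show -(lam • V) = (-lam) • V from (neg_smul lam V).symm,
      mdf_smul, ← hf, ← hg, hfg, neg_smul, add_neg_cancel]
  have hsub : ↑(T - lam • V).coeff.support ⊆ L := by
    intro p hp
    have hp' : p ∈ (T - lam•V).coeff.support := hp
    rw [sub_eq_add_neg, AddMonoidAlgebra.coeff_add, AddMonoidAlgebra.coeff_neg,
      AddMonoidAlgebra.coeff_smul] at hp'
    rcases Finset.mem_union.mp (Finsupp.support_add hp') with h1 | h1
    · exact hsuppT h1
    · rw [Finsupp.support_neg] at h1
      exact hsuppV (Finsupp.support_smul h1)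
  have hzero : ↑(0 : Ll K).coeff.support ⊆ L := by simp
  have hTV : T - lam • V = 0 :=
    mdf_injOn L hinj hsub hzero (hmap0.trans mdf_zero.symm)
  exact sub_eq_zero.mp hTV


end

section


variable {l : ℕ} {ρ σ : ℤ}

lemma exists_pos_nat_ratio {s r : ℚ} (hr : r ≠ 0) (hpos : 0 < s / r) :
    ∃ a b : ℕ, 0 < a ∧ 0 < b ∧ (a:ℚ) * s = (b:ℚ) * r := by
  set q := s / r with hq
  have hnum : 0 < q.num := Rat.num_pos.mpr hpos
  refine ⟨q.den, q.num.toNat, q.pos, by omega, ?_⟩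
  have hd : (q.den:ℚ) ≠ 0 := by exact_mod_cast q.den_pos.ne'
  have h3 : (q.num:ℚ) = q * q.den := (div_eq_iff hd).mp (Rat.num_div_den q)
  have h1 : (q.num.toNat : ℚ) = (q.num : ℚ) := by
    have h := Int.toNat_of_nonneg hnum.le
    exact_mod_cast congrArg (fun z : ℤ => (z:ℚ)) h
  have h2 : s = q * r := by rw [hq, div_mul_cancel₀ _ hr]
  rw [h1, h3, h2]
  ring

lemma vq_algebraMap {c : K} (hc : c ≠ 0) :
    vq l ρ σ (algebraMap K (Ll K) c) = 0 ∧
      lead l ρ σ (algebraMap K (Ll K) c) = algebraMap K (Ll K) c := by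
  have h0 : Hg l ρ σ 0 (algebraMap K (Ll K) c) := by
    rw [algebraMap_eq_single]
    have := Hg_single (l := l) (ρ := ρ) (σ := σ) (0 : ℤ×ℕ) c
    have hdg : dg l ρ σ (0 : ℤ×ℕ) = 0 := by unfold dg; simp
    rwa [hdg] at this
  exact lead_of_Hg (algebraMap_ne_zero hc) h0

/-- subtracting an element with equal degree and equal leading form drops the degree. -/
lemma vq_sub_lt {A B : Ll K} (hA : A ≠ 0) (hB : B ≠ 0) (hv : vq l ρ σ A = vq l ρ σ B)
    (hlead : lead l ρ σ A = lead l ρ σ B) (hne : A - B ≠ 0) :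
    vq l ρ σ (A - B) < vq l ρ σ A := by
  have hdec : A - B = (A - lead l ρ σ A) - (B - lead l ρ σ B) := by
    rw [hlead]; ring
  apply vq_lt_of_vlt hne
  rw [hdec]
  apply vlt_sub (vlt_sub_lead hA)
  rw [hv]
  exact vlt_sub_lead hB

section descent
variable {P Q : Ll K} {c : K}

/-- the quantity that strictly decreases during the descent. -/
def delta (l : ℕ) (ρ σ : ℤ) (P F : Ll K) : ℚ :=
  vq l ρ σ F - vq l ρ σ (br l F P)

lemma discrete_step (hl : 0 < l) {x y : ℚ} (hx : ∃ z : ℤ, x = (z:ℚ) / l)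
    (hy : ∃ z : ℤ, y = (z:ℚ) / l) (hxy : y < x) : y ≤ x - 1 / (l:ℚ) := by
  obtain ⟨zx, rfl⟩ := hx
  obtain ⟨zy, rfl⟩ := hy
  have hl0 : (0:ℚ) < (l:ℚ) := by positivity
  rw [div_lt_div_iff_of_pos_right hl0] at hxy
  have h2 : zy < zx := by exact_mod_cast hxy
  have h3 : (zy:ℚ) ≤ (zx:ℚ) - 1 := by
    have h4 : zy ≤ zx - 1 := by omega
    have h5 : ((zy:ℤ):ℚ) ≤ ((zx - 1 : ℤ):ℚ) := by exact_mod_cast h4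
    push_cast at h5
    linarith
  rw [div_sub_div_same, div_le_div_iff_of_pos_right hl0]
  exact h3

lemma delta_mem (hl : 0 < l) {F : Ll K} (hF : F ≠ 0) (hbrF : br l F P ≠ 0) :
    ∃ z : ℤ, delta l ρ σ P F = (z:ℚ) / l := by
  obtain ⟨z1, h1⟩ := vq_mem (ρ := ρ) (σ := σ) hl hF
  obtain ⟨z2, h2⟩ := vq_mem (ρ := ρ) (σ := σ) hl hbrF
  refine ⟨z1 - z2, ?_⟩
  unfold delta
  rw [h1, h2]
  push_cast
  ring

/-- the lower bound for `delta` coming from the vanishing of the leading bracket. -/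
lemma delta_lower (hl : 0 < l) (hP : P ≠ 0) {F : Ll K} (hF : F ≠ 0) (hbrF : br l F P ≠ 0)
    (h : br l (lead l ρ σ F) (lead l ρ σ P) = 0) :
    (ρ:ℚ) + (σ:ℚ) - vq l ρ σ P < delta l ρ σ P F := by
  have := vlt_br_of_eq hl hF hP h
  have h2 := vq_lt_of_vlt hbrF this
  unfold delta
  linarith

/-- one step of the descent. -/
lemma descent_step (hl : 0 < l) (hdir : IsDirV (ρ, σ)) (hP : P ≠ 0)
    (hp : vq l ρ σ P ≠ 0)
    (Hall : ∀ F ∈ Algebra.adjoin K {P, Q}, br l (lead l ρ σ F) (lead l ρ σ P) = 0)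
    (F : Ll K) (hmem : F ∈ Algebra.adjoin K {P, Q}) (hF0 : F ≠ 0)
    (hbrF : br l F P ≠ 0) :
    ∃ F' : Ll K, (F' ∈ Algebra.adjoin K {P, Q} ∧ F' ≠ 0 ∧ br l F' P ≠ 0) ∧
      delta l ρ σ P F' ≤ delta l ρ σ P F - 1 / (l:ℚ) := by
  classical
  set r := vq l ρ σ P with hrdef
  set s := vq l ρ σ F with hsdef
  set β := vq l ρ σ (br l F P) with hβdef
  have hR0 : lead l ρ σ P ≠ 0 := lead_ne_zero hP
  have hS0 : lead l ρ σ F ≠ 0 := lead_ne_zero hF0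
  have hHgR : Hg l ρ σ r (lead l ρ σ P) := Hg_lead hP
  have hHgS : Hg l ρ σ s (lead l ρ σ F) := Hg_lead hF0
  have hbr0 : br l (lead l ρ σ P) (lead l ρ σ F) = 0 := by
    rw [br_antisymm, Hall F hmem, neg_zero]
  have hPmem : P ∈ Algebra.adjoin K {P, Q} :=
    Algebra.subset_adjoin (Set.mem_insert _ _)
  -- goal transformer: it suffices to build F' with a strict delta decrease
  suffices h : ∃ F' : Ll K, (F' ∈ Algebra.adjoin K {P, Q} ∧ F' ≠ 0 ∧ br l F' P ≠ 0) ∧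
      delta l ρ σ P F' < delta l ρ σ P F by
    obtain ⟨F', hprops, hlt⟩ := h
    exact ⟨F', hprops, discrete_step hl (delta_mem hl hF0 hbrF)
      (delta_mem hl hprops.2.1 hprops.2.2) hlt⟩
  by_cases hs : s = 0
  · -- constant leading form
    obtain ⟨lam, hlam, hSlam⟩ := prop_s_zero hl hHgR hHgS hbr0 hp hR0 hS0 hs
    set F' := F - algebraMap K (Ll K) lam with hF'
    have hbrF' : br l F' P = br l F P := by
      rw [hF', br_sub_left, br_algebraMap_left, sub_zero]
    have hF'0 : F' ≠ 0 := by
      intro h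
      rw [h, br_zero_left] at hbrF'
      exact hbrF hbrF'.symm
    have hmem' : F' ∈ Algebra.adjoin K {P, Q} :=
      Subalgebra.sub_mem _ hmem (Subalgebra.algebraMap_mem _ lam)
    refine ⟨F', ⟨hmem', hF'0, by rw [hbrF']; exact hbrF⟩, ?_⟩
    unfold delta
    rw [hbrF']
    have hlt : vq l ρ σ F' < s := by
      apply vq_sub_lt hF0 (algebraMap_ne_zero hlam) _ _ hF'0
      · rw [(vq_algebraMap hlam).1, ← hsdef, hs]
      · rw [(vq_algebraMap hlam).2, ← hSlam]
    rw [← hsdef, ← hβdef]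
    linarith
  · have hsr : s / r ≠ 0 := div_ne_zero hs hp
    rcases lt_or_gt_of_ne hsr with hneg | hpos
    · -- opposite signs
      have hpos' : 0 < (-s) / r := by
        rw [neg_div]
        linarith
      obtain ⟨a, b, ha, hb, hab⟩ := exists_pos_nat_ratio hp hpos'
      have hab' : (a:ℚ) * s + (b:ℚ) * r = 0 := by
        have : (a:ℚ) * (-s) = (b:ℚ) * r := hab
        linarith
      obtain ⟨lam, hlam, hSR⟩ := prop_mixed hl hHgR hHgS hbr0 hp hR0 hS0 ha hb hab'
      set F' := F ^ a * P ^ b - algebraMap K (Ll K) lam with hF'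
      have hbrPpow : br l (P ^ b) P = 0 := by
        rw [br_pow_left, br_self, mul_zero, smul_zero]
      have hbrFa : br l (F ^ a) P = (a:K) • (F ^ (a-1) * br l F P) := br_pow_left l F P a
      have hprod : br l (F ^ a * P ^ b) P
          = P ^ b * ((a:K) • (F ^ (a-1) * br l F P)) := by
        rw [br_mul_left, hbrPpow, mul_zero, zero_add, hbrFa]
      have hbrval : br l F' P = P ^ b * ((a:K) • (F ^ (a-1) * br l F P)) := by
        rw [hF', br_sub_left, br_algebraMap_left, sub_zero, hprod]
      have hbrne : br l F' P ≠ 0 := by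
        rw [hbrval]
        apply mul_ne_zero (pow_ne_zero b hP)
        rw [smul_ne_zero_iff]
        constructor
        · exact_mod_cast ha.ne'
        · exact mul_ne_zero (pow_ne_zero _ hF0) hbrF
      have hF'0 : F' ≠ 0 := by
        intro h
        rw [h, br_zero_left] at hbrne
        exact hbrne rfl
      have hmem' : F' ∈ Algebra.adjoin K {P, Q} :=
        Subalgebra.sub_mem _ (Subalgebra.mul_mem _ (Subalgebra.pow_mem _ hmem a)
          (Subalgebra.pow_mem _ hPmem b)) (Subalgebra.algebraMap_mem _ lam)
      refine ⟨F', ⟨hmem', hF'0, hbrne⟩, ?_⟩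
      -- vq F' < 0
      have hFa := lead_pow (l := l) (ρ := ρ) (σ := σ) hF0 a
      have hPb := lead_pow (l := l) (ρ := ρ) (σ := σ) hP b
      have hFaPb := lead_mul (l := l) (ρ := ρ) (σ := σ) hFa.1 hPb.1
      have hvFaPb : vq l ρ σ (F ^ a * P ^ b) = 0 := by
        rw [hFaPb.2.1, hFa.2.1, hPb.2.1, ← hsdef, ← hrdef]
        linarith
      have hleadFaPb : lead l ρ σ (F ^ a * P ^ b) = algebraMap K (Ll K) lam := by
        rw [hFaPb.2.2, hFa.2.2, hPb.2.2, hSR]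
      have hvF' : vq l ρ σ F' < 0 := by
        have := vq_sub_lt (A := F ^ a * P ^ b) (B := algebraMap K (Ll K) lam)
          hFaPb.1 (algebraMap_ne_zero hlam)
          (by rw [hvFaPb, (vq_algebraMap hlam).1])
          (by rw [hleadFaPb, (vq_algebraMap hlam).2]) hF'0
        rw [hvFaPb] at this
        exact this
      -- vq (br F' P) = b r + (a-1) s + β
      have hterm : vq l ρ σ (br l F' P) = (b:ℚ) * r + ((a:ℚ) - 1) * s + β := by
        rw [hbrval]
        have h1 : F ^ (a-1) * br l F P ≠ 0 := mul_ne_zero (pow_ne_zero _ hF0) hbrF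
        have h2 := lead_smul (l := l) (ρ := ρ) (σ := σ) ((a:K))
          (by exact_mod_cast ha.ne') h1
        have h3 := lead_mul (l := l) (ρ := ρ) (σ := σ) (pow_ne_zero b hP) h2.1
        rw [h3.2.1, h2.2.1, (lead_mul (l := l) (ρ := ρ) (σ := σ)
          (pow_ne_zero (a-1) hF0) hbrF).2.1, (lead_pow (l := l) (ρ := ρ) (σ := σ) hP b).2.1,
          (lead_pow (l := l) (ρ := ρ) (σ := σ) hF0 (a-1)).2.1, ← hrdef, ← hsdef, ← hβdef]
        have hcast : ((a - 1 : ℕ) : ℚ) = (a:ℚ) - 1 := by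
          rw [Nat.cast_sub ha, Nat.cast_one]
        rw [hcast]
        try ring
      unfold delta
      rw [hterm, ← hsdef, ← hβdef]
      have : vq l ρ σ F' < 0 := hvF'
      -- delta F' = vq F' - (b r + (a-1) s + β) < 0 - (b r + (a-1)s + β) = s - β
      have hkey : -((b:ℚ) * r) = (a:ℚ) * s := by linarith
      nlinarith [hvF']
    · -- same sign
      obtain ⟨a, b, ha, hb, hab⟩ := exists_pos_nat_ratio hp hpos
      obtain ⟨lam, hlam, hSR⟩ := prop_same hl hdir hHgR hHgS hbr0 hp hR0 hS0 ha hb hab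
      set F' := F ^ a - lam • P ^ b with hF'
      have hbrPpow : br l (P ^ b) P = 0 := by
        rw [br_pow_left, br_self, mul_zero, smul_zero]
      have hbrval : br l F' P = (a:K) • (F ^ (a-1) * br l F P) := by
        rw [hF', br_sub_left, br_smul_left, hbrPpow, smul_zero, sub_zero, br_pow_left]
      have hbrne : br l F' P ≠ 0 := by
        rw [hbrval, smul_ne_zero_iff]
        constructor
        · exact_mod_cast ha.ne'
        · exact mul_ne_zero (pow_ne_zero _ hF0) hbrF
      have hF'0 : F' ≠ 0 := by
        intro h
        rw [h, br_zero_left] at hbrne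
        exact hbrne rfl
      have hmem' : F' ∈ Algebra.adjoin K {P, Q} := by
        apply Subalgebra.sub_mem _ (Subalgebra.pow_mem _ hmem a)
        have := Subalgebra.pow_mem (Algebra.adjoin K {P, Q}) hPmem b
        exact Subalgebra.smul_mem _ this lam
      refine ⟨F', ⟨hmem', hF'0, hbrne⟩, ?_⟩
      have hFa := lead_pow (l := l) (ρ := ρ) (σ := σ) hF0 a
      have hPb := lead_pow (l := l) (ρ := ρ) (σ := σ) hP b
      have hlamPb := lead_smul (l := l) (ρ := ρ) (σ := σ) lam hlam hPb.1
      have hvF' : vq l ρ σ F' < (a:ℚ) * s := by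
        have := vq_sub_lt (A := F ^ a) (B := lam • P ^ b) hFa.1 hlamPb.1
          (by rw [hFa.2.1, hlamPb.2.1, hPb.2.1, ← hsdef, ← hrdef]; exact hab)
          (by rw [hFa.2.2, hlamPb.2.2, hPb.2.2, hSR]) hF'0
        rw [hFa.2.1, ← hsdef] at this
        exact this
      have hterm : vq l ρ σ (br l F' P) = ((a:ℚ) - 1) * s + β := by
        rw [hbrval]
        have h1 : F ^ (a-1) * br l F P ≠ 0 := mul_ne_zero (pow_ne_zero _ hF0) hbrF
        have h2 := lead_smul (l := l) (ρ := ρ) (σ := σ) ((a:K))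
          (by exact_mod_cast ha.ne') h1
        rw [h2.2.1, (lead_mul (l := l) (ρ := ρ) (σ := σ)
          (pow_ne_zero (a-1) hF0) hbrF).2.1,
          (lead_pow (l := l) (ρ := ρ) (σ := σ) hF0 (a-1)).2.1, ← hsdef, ← hβdef]
        have hcast : ((a - 1 : ℕ) : ℚ) = (a:ℚ) - 1 := by
          rw [Nat.cast_sub ha, Nat.cast_one]
        rw [hcast]
        try ring
      unfold delta
      rw [hterm, ← hsdef, ← hβdef]
      linarith

/-- the descent: contradiction from the assumption that all leading brackets vanish. -/
lemma descent_contradiction (hl : 0 < l) (hdir : IsDirV (ρ, σ)) (hP : P ≠ 0) (hQ : Q ≠ 0)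
    (hc : c ≠ 0) (hjac : br l P Q = algebraMap K (Ll K) c) (hp : vq l ρ σ P ≠ 0)
    (Hall : ∀ F ∈ Algebra.adjoin K {P, Q}, br l (lead l ρ σ F) (lead l ρ σ P) = 0) :
    False := by
  have hQmem : Q ∈ Algebra.adjoin K {P, Q} :=
    Algebra.subset_adjoin (Set.mem_insert_of_mem _ rfl)
  have hbrQ : br l Q P ≠ 0 := by
    rw [br_antisymm, hjac]
    intro h
    rw [neg_eq_zero] at h
    exact algebraMap_ne_zero hc h
  have main : ∀ n : ℕ, ∃ F : Ll K,
      (F ∈ Algebra.adjoin K {P, Q} ∧ F ≠ 0 ∧ br l F P ≠ 0) ∧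
      delta l ρ σ P F ≤ delta l ρ σ P Q - (n:ℚ) / (l:ℚ) := by
    intro n
    induction n with
    | zero => exact ⟨Q, ⟨hQmem, hQ, hbrQ⟩, by simp⟩
    | succ n ih =>
        obtain ⟨F, ⟨hmem, hF0, hbrF⟩, hbound⟩ := ih
        obtain ⟨F', hprops, hstep⟩ := descent_step hl hdir hP hp Hall F hmem hF0 hbrF
        refine ⟨F', hprops, ?_⟩
        have : ((n:ℚ) + 1) / (l:ℚ) = (n:ℚ)/(l:ℚ) + 1/(l:ℚ) := by ring
        push_cast
        rw [this]
        linarith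
  -- lower bound
  set B : ℚ := (ρ:ℚ) + (σ:ℚ) - vq l ρ σ P with hB
  obtain ⟨n, hn⟩ := exists_nat_ge ((delta l ρ σ P Q - B) * l)
  obtain ⟨F, ⟨hmem, hF0, hbrF⟩, hbound⟩ := main n
  have hlow := delta_lower hl hP hF0 hbrF (Hall F hmem)
  have hl0 : (0:ℚ) < (l:ℚ) := by positivity
  have h6 : delta l ρ σ P Q - B ≤ (n:ℚ)/(l:ℚ) := by
    have h7 : (delta l ρ σ P Q - B) * l / l ≤ (n:ℚ) / l :=
      (div_le_div_iff_of_pos_right hl0).mpr hn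
    calc delta l ρ σ P Q - B = (delta l ρ σ P Q - B) * l / l := by field_simp
      _ ≤ (n:ℚ)/(l:ℚ) := h7
  have hlow' : B < delta l ρ σ P F := hlow
  linarith

end descent

end

section


variable {l : ℕ} {ρ σ : ℤ}

section phi
variable (P Q : Ll K)

/-- evaluation `K[x][y] → L^(l)` sending the inner variable to `P`. -/
def psiP : Polynomial K →+* Ll K := Polynomial.eval₂RingHom (algebraMap K (Ll K)) P

/-- evaluation `K[X][Y] → L^(l)`, `X ↦ P`, `Y ↦ Q`. -/
def Ph (F : Polynomial (Polynomial K)) : Ll K := Polynomial.eval₂ (psiP P) Q F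

lemma psiP_mem (g : Polynomial K) : psiP P g ∈ Algebra.adjoin K {P, Q} := by
  unfold psiP
  rw [Polynomial.coe_eval₂RingHom]
  refine Polynomial.induction_on g (fun a => ?_) (fun p q hp hq => ?_) (fun n a ih => ?_)
  · rw [Polynomial.eval₂_C]
    exact Subalgebra.algebraMap_mem _ a
  · rw [Polynomial.eval₂_add]
    exact Subalgebra.add_mem _ hp hq
  · rw [Polynomial.eval₂_mul, Polynomial.eval₂_C, Polynomial.eval₂_X_pow]
    exact Subalgebra.mul_mem _ (Subalgebra.algebraMap_mem _ a)
      (Subalgebra.pow_mem _ (Algebra.subset_adjoin (Set.mem_insert _ _)) _)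

lemma Ph_mem (F : Polynomial (Polynomial K)) : Ph P Q F ∈ Algebra.adjoin K {P, Q} := by
  unfold Ph
  refine Polynomial.induction_on F (fun g => ?_) (fun p q hp hq => ?_) (fun n g ih => ?_)
  · rw [Polynomial.eval₂_C]
    exact psiP_mem P Q g
  · rw [Polynomial.eval₂_add]
    exact Subalgebra.add_mem _ hp hq
  · rw [Polynomial.eval₂_mul, Polynomial.eval₂_C, Polynomial.eval₂_X_pow]
    have h1 : psiP P g ∈ Algebra.adjoin K {P, Q} := psiP_mem P Q g
    have h2 : Q ∈ Algebra.adjoin K {P, Q} :=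
      Algebra.subset_adjoin (Set.mem_insert_of_mem _ rfl)
    have h3 : Q ^ (n+1) ∈ Algebra.adjoin K {P, Q} := Subalgebra.pow_mem _ h2 (n+1)
    exact Subalgebra.mul_mem _ h1 h3

lemma Ph_add (F G : Polynomial (Polynomial K)) : Ph P Q (F + G) = Ph P Q F + Ph P Q G := by
  unfold Ph; rw [Polynomial.eval₂_add]

lemma Ph_zero : Ph P Q 0 = 0 := by unfold Ph; rw [Polynomial.eval₂_zero]

lemma br_psiP (g : Polynomial K) : br l (psiP P g) P = 0 := by
  unfold psiP
  rw [Polynomial.coe_eval₂RingHom]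
  refine Polynomial.induction_on g (fun a => ?_) (fun p q hp hq => ?_) (fun n a ih => ?_)
  · rw [Polynomial.eval₂_C]
    exact br_algebraMap_left l a P
  · rw [Polynomial.eval₂_add, br_add_left, hp, hq, add_zero]
  · rw [Polynomial.eval₂_mul, Polynomial.eval₂_C, Polynomial.eval₂_X_pow]
    rw [br_mul_left, br_pow_left, br_self, mul_zero, smul_zero, mul_zero, zero_add,
      br_algebraMap_left, mul_zero]

/-- chain rule for the bracket against `P`. -/
lemma br_Ph (F : Polynomial (Polynomial K)) :
    br l (Ph P Q F) P = Ph P Q (Polynomial.derivative F) * br l Q P := by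
  unfold Ph
  refine Polynomial.induction_on F (fun g => ?_) (fun p q hp hq => ?_) (fun n g ih => ?_)
  · rw [Polynomial.eval₂_C, Polynomial.derivative_C, Polynomial.eval₂_zero, zero_mul]
    exact br_psiP P g
  · rw [Polynomial.eval₂_add, br_add_left, hp, hq, map_add, Polynomial.eval₂_add]
    ring
  · rw [Polynomial.eval₂_mul, Polynomial.eval₂_C, Polynomial.eval₂_X_pow]
    rw [br_mul_left, br_psiP, mul_zero, add_zero, br_pow_left]
    rw [Polynomial.derivative_C_mul, Polynomial.derivative_X_pow]
    rw [Polynomial.eval₂_mul, Polynomial.eval₂_C, Polynomial.eval₂_mul, Polynomial.eval₂_C,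
      Polynomial.eval₂_X_pow]
    have hnat : (psiP P) ((n + 1 : ℕ) : Polynomial K) = ((n + 1 : ℕ) : Ll K) :=
      map_natCast (psiP P) (n+1)
    have hsmul : ∀ X : Ll K, ((n+1 : ℕ):K) • X = ((n+1 : ℕ) : Ll K) * X := by
      intro X
      rw [Algebra.smul_def, map_natCast]
    rw [show (n + 1 - 1 : ℕ) = n from rfl] at *
    rw [hnat, hsmul]
    push_cast
    ring

end phi

/-- Main theorem assembly. -/
theorem statement2' (hl : 0 < l) (hdir : IsDirV (ρ, σ))
    (P Q : Ll K) (hP : P ≠ 0) (hQ : Q ≠ 0)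
    (hjac : JacConst l P Q) (hv : vq l ρ σ P ≠ 0) :
    ∃ G : ℕ → Ll K,
      G 0 ∈ Algebra.adjoin K {P, Q} ∧
      (∀ i, G (i + 1) = br l (G i) P) ∧
      br l (lead l ρ σ (G 0)) (lead l ρ σ P) ≠ 0 ∧
      br l (br l (lead l ρ σ (G 0)) (lead l ρ σ P)) (lead l ρ σ P) = 0 ∧
      (∀ i, 1 ≤ i → br l (lead l ρ σ (G i)) (lead l ρ σ P) = 0) := by
  classical
  obtain ⟨c, hc, hjac'⟩ := hjac
  -- step 1: there is a polynomial with nonvanishing leading bracket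
  have hexists : ∃ n : ℕ, ∃ F : Polynomial (Polynomial K),
      F.natDegree ≤ n ∧ br l (lead l ρ σ (Ph P Q F)) (lead l ρ σ P) ≠ 0 := by
    by_contra hno
    push_neg at hno
    apply descent_contradiction hl hdir hP hQ hc hjac' hv
    intro F hmem
    -- F is in the range of Ph
    have hrange : ∃ 𝔽 : Polynomial (Polynomial K), Ph P Q 𝔽 = F := by
      have hPm : Ph P Q (Polynomial.C Polynomial.X) = P := by
        unfold Ph
        rw [Polynomial.eval₂_C]
        show Polynomial.eval₂ (algebraMap K (Ll K)) P Polynomial.X = P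
        rw [Polynomial.eval₂_X]
      have hQm : Ph P Q Polynomial.X = Q := by
        unfold Ph
        rw [Polynomial.eval₂_X]
      let PhA : Polynomial (Polynomial K) →ₐ[K] Ll K :=
        { toRingHom := Polynomial.eval₂RingHom (psiP P) Q
          commutes' := fun a => by
            show Polynomial.eval₂ (psiP P) Q (algebraMap K (Polynomial (Polynomial K)) a)
              = algebraMap K (Ll K) a
            rw [show algebraMap K (Polynomial (Polynomial K)) a
                = Polynomial.C (Polynomial.C a) from rfl, Polynomial.eval₂_C]
            show Polynomial.eval₂ (algebraMap K (Ll K)) P (Polynomial.C a) = _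
            rw [Polynomial.eval₂_C] }
      have hle : Algebra.adjoin K {P, Q} ≤ PhA.range := by
        apply Algebra.adjoin_le
        intro x hx
        rcases hx with hx | hx
        · rw [hx]
          exact ⟨Polynomial.C Polynomial.X, hPm⟩
        · rw [Set.mem_singleton_iff] at hx
          rw [hx]
          exact ⟨Polynomial.X, hQm⟩
      obtain ⟨𝔽, h𝔽⟩ := hle hmem
      exact ⟨𝔽, h𝔽⟩
    obtain ⟨𝔽, rfl⟩ := hrange
    exact hno 𝔽.natDegree 𝔽 le_rfl
  -- minimal degree
  have hprex : ∃ n : ℕ, ∃ F : Polynomial (Polynomial K),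
      F.natDegree ≤ n ∧ br l (lead l ρ σ (Ph P Q F)) (lead l ρ σ P) ≠ 0 := hexists
  set n₀ := Nat.find hprex with hn₀
  obtain ⟨F, hFdeg, hFbr⟩ := Nat.find_spec hprex
  have hmin : ∀ F' : Polynomial (Polynomial K), F'.natDegree < n₀ →
      br l (lead l ρ σ (Ph P Q F')) (lead l ρ σ P) = 0 := by
    intro F' hlt
    by_contra hne
    exact Nat.find_min hprex hlt ⟨F', le_rfl, hne⟩
  -- the sequence
  set e : Ll K := algebraMap K (Ll K) (-c) with he
  have hbrQP : br l Q P = e := by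
    rw [br_antisymm, hjac', he, map_neg]
  set Gfun : ℕ → Ll K := fun i => Nat.rec (Ph P Q F) (fun _ G => br l G P) i with hGfun
  have hGsucc : ∀ i, Gfun (i+1) = br l (Gfun i) P := fun i => rfl
  have hGi : ∀ i, Gfun i = Ph P Q (Polynomial.derivative^[i] F) * e ^ i := by
    intro i
    induction i with
    | zero =>
        rw [Function.iterate_zero, id_eq, pow_zero, mul_one]
        rfl
    | succ i ih =>
        rw [hGsucc, ih, br_mul_left]
        have h1 : br l (e ^ i) P = 0 := by
          rw [he, ← map_pow, br_algebraMap_left]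
        rw [h1, mul_zero, zero_add, br_Ph, hbrQP, Function.iterate_succ_apply']
        ring
  -- iterated derivatives have small degree
  have hDi : ∀ i, 1 ≤ i →
      br l (lead l ρ σ (Ph P Q (Polynomial.derivative^[i] F))) (lead l ρ σ P) = 0 := by
    intro i hi
    by_cases hz : Polynomial.derivative^[i] F = 0
    · rw [hz, Ph_zero, lead_zero, br_zero_left]
    · apply hmin
      rcases Nat.eq_zero_or_pos n₀ with h0 | hpos1
      · exfalso
        apply hz
        have hdeg0 : F.natDegree = 0 := by omega
        obtain ⟨a, ha⟩ := Polynomial.natDegree_eq_zero.mp hdeg0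
        obtain ⟨j, rfl⟩ : ∃ j, i = j + 1 := ⟨i - 1, by omega⟩
        rw [Function.iterate_succ_apply, show Polynomial.derivative F = 0 from by
          rw [← ha, Polynomial.derivative_C]]
        exact Function.iterate_fixed (map_zero Polynomial.derivative) j
      · have hle := Polynomial.natDegree_iterate_derivative F i
        omega
  have hG0ne : Gfun 0 ≠ 0 := by
    intro h
    apply hFbr
    have : Gfun 0 = Ph P Q F := rfl
    rw [← this, h, lead_zero, br_zero_left]
  have hmain : ∀ i, 1 ≤ i → br l (lead l ρ σ (Gfun i)) (lead l ρ σ P) = 0 := by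
    intro i hi
    rw [hGi i]
    by_cases hz : Ph P Q (Polynomial.derivative^[i] F) = 0
    · rw [hz, zero_mul, lead_zero, br_zero_left]
    · have hsm : Ph P Q (Polynomial.derivative^[i] F) * e ^ i
          = ((-c)^i) • Ph P Q (Polynomial.derivative^[i] F) := by
        rw [he, ← map_pow, Algebra.smul_def]
        exact mul_comm _ _
      rw [hsm]
      have hcp : ((-c)^i) ≠ 0 := pow_ne_zero _ (neg_ne_zero.mpr hc)
      have hls := lead_smul (l := l) (ρ := ρ) (σ := σ) ((-c)^i) hcp hz
      rw [hls.2.2, br_smul_left, hDi i hi, smul_zero]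
  refine ⟨Gfun, Ph_mem P Q F, hGsucc, hFbr, ?_, hmain⟩
  -- second bracket vanishes
  have hlead := lead_br_of_ne hl hG0ne hP hFbr
  rw [← hlead.2.2]
  exact hmain 1 le_rfl


end

/-- Lemma 2.2.  If `[P,Q] ∈ K^×` and `v_{ρ,σ}(P) ≠ 0`, then there is a
`G₀` in the subalgebra `K[P,Q]` with `[ℓ_{ρ,σ}(G₀), ℓ_{ρ,σ}(P)] ≠ 0` and
`[[ℓ_{ρ,σ}(G₀), ℓ_{ρ,σ}(P)], ℓ_{ρ,σ}(P)] = 0`; moreover, defining `G_i := [G_{i-1}, P]`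
recursively, `[ℓ_{ρ,σ}(G_i), ℓ_{ρ,σ}(P)] = 0` for all `i ≥ 1`. -/
theorem statement2 (l : ℕ) (hl : 0 < l) (ρ σ : ℤ) (hdir : IsDirV (ρ, σ))
    (P Q : Ll K) (hP : P ≠ 0) (hQ : Q ≠ 0)
    (hjac : JacConst l P Q) (hv : vq l ρ σ P ≠ 0) :
    ∃ G : ℕ → Ll K,
      G 0 ∈ Algebra.adjoin K {P, Q} ∧
      (∀ i, G (i + 1) = br l (G i) P) ∧
      br l (lead l ρ σ (G 0)) (lead l ρ σ P) ≠ 0 ∧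
      br l (br l (lead l ρ σ (G 0)) (lead l ρ σ P)) (lead l ρ σ P) = 0 ∧
      (∀ i, 1 ≤ i → br l (lead l ρ σ (G i)) (lead l ρ σ P) = 0) :=
  statement2' hl hdir P Q hP hQ hjac hv

end JC
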